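/- arXiv:2202.02943 — 4 statements merged into one kernel-verified Lean document; each statement's English description precedes it below -/
import Mathlib

section
/- Let P₀ and P₁ be two Borel probability measures on ℝ^m, and define the sigmoid IPM d_sig(P₀,P₁) = sup over θ ∈ ℝ^m and μ ∈ ℝ of |∫ σ(θᵀz + μ) dP₀(z) − ∫ σ(θᵀz + μ) dP₁(z)|, where σ(t) = 1/(1 + e^{−t}). Then d_sig(P₀,P₁) = 0 if and only if P₀ = P₁. -/
open MeasureTheory

/-- The sigmoid function `σ(t) = 1/(1 + e^{-t})`. -/
noncomputable def sigmoid (t : ℝ) : ℝ := 1 / (1 + Real.exp (-t))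

/-- The sigmoid IPM between two measures on `ℝ^m`:
`d_sig(P₀,P₁) = sup_{θ ∈ ℝ^m, μ ∈ ℝ} |∫ σ(θᵀz + μ) dP₀ - ∫ σ(θᵀz + μ) dP₁|`. -/
noncomputable def sigmoidIPM {m : ℕ} (P₀ P₁ : Measure (Fin m → ℝ)) : ℝ :=
  ⨆ p : (Fin m → ℝ) × ℝ,
    |(∫ z, sigmoid ((∑ i, p.1 i * z i) + p.2) ∂P₀) -
      ∫ z, sigmoid ((∑ i, p.1 i * z i) + p.2) ∂P₁|

section SigmoidBasics

open Real hiding sigmoid sigmoid_pos sigmoid_nonneg sigmoid_le_one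
open Metric Set Filter
open scoped Topology

lemma sigmoid_pos (t : ℝ) : 0 < sigmoid t := by
  unfold sigmoid; positivity

lemma one_add_exp_pos (t : ℝ) : (0:ℝ) < 1 + Real.exp (-t) := by positivity

lemma sigmoid_le_one (t : ℝ) : sigmoid t ≤ 1 := by
  rw [sigmoid, div_le_one (one_add_exp_pos t)]
  nlinarith [Real.exp_pos (-t)]

lemma sigmoid_nonneg (t : ℝ) : 0 ≤ sigmoid t := (sigmoid_pos t).le

lemma sigmoid_mono : Monotone sigmoid := by
  intro a b hab
  rw [sigmoid, sigmoid, div_le_div_iff₀ (one_add_exp_pos a) (one_add_exp_pos b)]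
  have := Real.exp_le_exp.mpr (neg_le_neg hab)
  nlinarith

lemma continuous_sigmoid' : Continuous sigmoid := by
  apply Continuous.div continuous_const
  · exact continuous_const.add (Real.continuous_exp.comp continuous_neg)
  · intro t; exact (one_add_exp_pos t).ne'

lemma sigmoid_tendsto_atTop : Tendsto sigmoid atTop (𝓝 1) := by
  have h : Tendsto (fun t : ℝ => 1 + Real.exp (-t)) atTop (𝓝 (1 + 0)) :=
    tendsto_const_nhds.add (Real.tendsto_exp_atBot.comp tendsto_neg_atTop_atBot)
  have h2 : Tendsto (fun t : ℝ => 1 / (1 + Real.exp (-t))) atTop (𝓝 (1 / (1+0))) :=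
    (tendsto_const_nhds (x := (1:ℝ))).div h (by norm_num)
  have e : sigmoid = fun t : ℝ => 1 / (1 + Real.exp (-t)) := rfl
  rw [e]; simpa using h2

lemma sigmoid_tendsto_atBot : Tendsto sigmoid atBot (𝓝 0) := by
  have h : Tendsto (fun t : ℝ => 1 + Real.exp (-t)) atBot atTop := by
    apply tendsto_atTop_add_const_left
    exact Real.tendsto_exp_atTop.comp tendsto_neg_atBot_atTop
  have h2 := h.inv_tendsto_atTop
  have : sigmoid = fun t : ℝ => (1 + Real.exp (-t))⁻¹ := by
    funext t; rw [sigmoid, one_div]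
  rw [this]; exact h2

lemma integrable_of_le_one {α : Type*} [MeasurableSpace α] (μ : Measure α) [IsFiniteMeasure μ]
    {f : α → ℝ} (hm : AEStronglyMeasurable f μ) (h0 : ∀ x, 0 ≤ f x) (h1 : ∀ x, f x ≤ 1) :
    Integrable f μ := by
  refine Integrable.mono' (integrable_const 1) hm ?_
  filter_upwards with x
  rw [Real.norm_eq_abs, abs_of_nonneg (h0 x)]; exact h1 x

lemma integrable_sigmoid_comp {α : Type*} [MeasurableSpace α] [TopologicalSpace α]
    [OpensMeasurableSpace α] (μ : Measure α) [IsFiniteMeasure μ]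
    {f : α → ℝ} (hf : Continuous f) : Integrable (fun x => sigmoid (f x)) μ :=
  integrable_of_le_one μ ((continuous_sigmoid'.comp hf).aestronglyMeasurable)
    (fun x => sigmoid_nonneg _) (fun x => sigmoid_le_one _)

end SigmoidBasics

section OneDimensional

open Real hiding sigmoid sigmoid_pos sigmoid_nonneg sigmoid_le_one
open Metric Set Filter
open scoped Topology

lemma cdf_le_of_sigmoid_eq (ν₀ ν₁ : Measure ℝ) [IsProbabilityMeasure ν₀] [IsProbabilityMeasure ν₁]
    (h : ∀ s c : ℝ, ∫ x, sigmoid (s * x + c) ∂ν₀ = ∫ x, sigmoid (s * x + c) ∂ν₁)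
    {t t'' : ℝ} (htt : t < t'') : (ν₀ (Iic t)).toReal ≤ (ν₁ (Iic t'')).toReal := by
  set t' := (t + t'') / 2 with ht'
  have h1 : t < t' := by rw [ht']; linarith
  have h2 : t' < t'' := by rw [ht']; linarith
  set a := (ν₀ (Iic t)).toReal
  set b := (ν₁ (Iic t'')).toReal
  have key : ∀ n : ℕ, sigmoid ((n : ℝ) * (t' - t)) * a ≤ b + sigmoid ((n : ℝ) * (t' - t'')) := by
    intro n
    have heq : ∫ x, sigmoid ((n : ℝ) * (t' - x)) ∂ν₀ = ∫ x, sigmoid ((n : ℝ) * (t' - x)) ∂ν₁ := by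
      have := h (-(n : ℝ)) ((n : ℝ) * t')
      simpa only [show ∀ x : ℝ, -(n : ℝ) * x + (n : ℝ) * t' = (n : ℝ) * (t' - x) by
        intro x; ring] using this
    have hint₀ : Integrable (fun x => sigmoid ((n : ℝ) * (t' - x))) ν₀ :=
      integrable_sigmoid_comp _ (by continuity)
    have hint₁ : Integrable (fun x => sigmoid ((n : ℝ) * (t' - x))) ν₁ :=
      integrable_sigmoid_comp _ (by continuity)
    have lower : sigmoid ((n : ℝ) * (t' - t)) * a ≤ ∫ x, sigmoid ((n : ℝ) * (t' - x)) ∂ν₀ := by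
      have hind : ∫ x, (Iic t).indicator (fun _ => sigmoid ((n : ℝ) * (t' - t))) x ∂ν₀
          = (ν₀ (Iic t)).toReal • sigmoid ((n : ℝ) * (t' - t)) :=
        integral_indicator_const _ measurableSet_Iic
      have hmono : ∀ x, (Iic t).indicator (fun _ => sigmoid ((n : ℝ) * (t' - t))) x
          ≤ sigmoid ((n : ℝ) * (t' - x)) := by
        intro x
        by_cases hx : x ∈ Iic t
        · rw [indicator_of_mem hx]
          exact sigmoid_mono (by nlinarith [mem_Iic.mp hx, Nat.cast_nonneg (α := ℝ) n])
        · rw [indicator_of_notMem hx]; exact sigmoid_nonneg _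
      have := integral_mono ((integrable_const _).indicator measurableSet_Iic) hint₀ hmono
      rw [hind] at this
      simpa [smul_eq_mul, mul_comm] using this
    have upper : ∫ x, sigmoid ((n : ℝ) * (t' - x)) ∂ν₁ ≤ b + sigmoid ((n : ℝ) * (t' - t'')) := by
      have hmono : ∀ x, sigmoid ((n : ℝ) * (t' - x))
          ≤ (Iic t'').indicator (fun _ => (1 : ℝ)) x + sigmoid ((n : ℝ) * (t' - t'')) := by
        intro x
        by_cases hx : x ∈ Iic t''
        · rw [indicator_of_mem hx]
          have := sigmoid_le_one ((n : ℝ) * (t' - x))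
          have := sigmoid_nonneg ((n : ℝ) * (t' - t''))
          linarith
        · rw [indicator_of_notMem hx]
          have hx' : t'' < x := not_le.mp hx
          have := sigmoid_mono (show (n : ℝ) * (t' - x) ≤ (n : ℝ) * (t' - t'') by
            nlinarith [Nat.cast_nonneg (α := ℝ) n])
          linarith
      have hint2 : Integrable (fun x => (Iic t'').indicator (fun _ => (1 : ℝ)) x
          + sigmoid ((n : ℝ) * (t' - t''))) ν₁ :=
        ((integrable_const _).indicator measurableSet_Iic).add (integrable_const _)
      have := integral_mono hint₁ hint2 hmono
      rwa [integral_add ((integrable_const _).indicator measurableSet_Iic) (integrable_const _),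
        integral_indicator_const _ measurableSet_Iic, integral_const, probReal_univ,
        one_smul, smul_eq_mul, mul_one] at this
    calc sigmoid ((n : ℝ) * (t' - t)) * a ≤ ∫ x, sigmoid ((n : ℝ) * (t' - x)) ∂ν₀ := lower
      _ = ∫ x, sigmoid ((n : ℝ) * (t' - x)) ∂ν₁ := heq
      _ ≤ b + sigmoid ((n : ℝ) * (t' - t'')) := upper
  have lim1 : Tendsto (fun n : ℕ => sigmoid ((n : ℝ) * (t' - t)) * a) atTop (𝓝 (1 * a)) := by
    refine Tendsto.mul_const a ?_
    exact sigmoid_tendsto_atTop.comp (tendsto_natCast_atTop_atTop.atTop_mul_const (by linarith))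
  have lim2 : Tendsto (fun n : ℕ => b + sigmoid ((n : ℝ) * (t' - t''))) atTop (𝓝 (b + 0)) := by
    refine tendsto_const_nhds.add ?_
    exact sigmoid_tendsto_atBot.comp
      (tendsto_natCast_atTop_atTop.atTop_mul_const_of_neg (by linarith))
  have := le_of_tendsto_of_tendsto' lim1 lim2 key
  simpa using this

lemma measure_eq_of_sigmoid_eq (ν₀ ν₁ : Measure ℝ)
    [IsProbabilityMeasure ν₀] [IsProbabilityMeasure ν₁]
    (h : ∀ s c : ℝ, ∫ x, sigmoid (s * x + c) ∂ν₀ = ∫ x, sigmoid (s * x + c) ∂ν₁) : ν₀ = ν₁ := by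
  have main : ∀ (μ ν : Measure ℝ), IsProbabilityMeasure μ → IsProbabilityMeasure ν →
      (∀ s c : ℝ, ∫ x, sigmoid (s * x + c) ∂μ = ∫ x, sigmoid (s * x + c) ∂ν) →
      ∀ t, (μ (Iic t)).toReal ≤ (ν (Iic t)).toReal := by
    intro μ ν hμ hν hh t
    haveI := hμ; haveI := hν
    have hiInter : ⋂ n : ℕ, Iic (t + 1 / (n + 1)) = Iic t := by
      ext x
      simp only [mem_iInter, mem_Iic]
      constructor
      · intro hx
        refine le_of_forall_pos_le_add fun ε hε => ?_
        obtain ⟨n, hn⟩ := exists_nat_one_div_lt hε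
        exact (hx n).trans (by linarith [hn.le])
      · intro hx n
        have : (0:ℝ) < 1 / (n + 1) := by positivity
        linarith
    have htend : Tendsto (fun n : ℕ => ν (Iic (t + 1 / (n + 1)))) atTop (𝓝 (ν (Iic t))) := by
      have := tendsto_measure_iInter_atTop (μ := ν)
        (s := fun n : ℕ => Iic (t + 1 / (n + 1)))
        (fun n => measurableSet_Iic.nullMeasurableSet)
        (fun i j hij => Iic_subset_Iic.mpr (by
          have : (1:ℝ) / (j + 1) ≤ 1 / (i + 1) := by
            apply one_div_le_one_div_of_le (by positivity)
            exact_mod_cast add_le_add_left (Nat.cast_le.mpr hij) 1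
          linarith))
        ⟨0, measure_ne_top _ _⟩
      rwa [hiInter] at this
    have htendR : Tendsto (fun n : ℕ => (ν (Iic (t + 1 / (n + 1)))).toReal) atTop
        (𝓝 ((ν (Iic t)).toReal)) :=
      (ENNReal.tendsto_toReal (measure_ne_top _ _)).comp htend
    refine ge_of_tendsto' htendR fun n => ?_
    exact cdf_le_of_sigmoid_eq μ ν hh (lt_add_of_pos_right t (by positivity))
  have h' : ∀ s c : ℝ, ∫ x, sigmoid (s * x + c) ∂ν₁ = ∫ x, sigmoid (s * x + c) ∂ν₀ :=
    fun s c => (h s c).symm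
  refine Measure.ext_of_Iic ν₀ ν₁ fun t => ?_
  have h01 := main ν₀ ν₁ inferInstance inferInstance h t
  have h10 := main ν₁ ν₀ inferInstance inferInstance h' t
  have := le_antisymm h01 h10
  exact (ENNReal.toReal_eq_toReal_iff' (measure_ne_top _ _) (measure_ne_top _ _)).mp this

end OneDimensional

section SchwartzExt

open Real hiding sigmoid sigmoid_pos sigmoid_nonneg sigmoid_le_one
open Metric Set Filter
open scoped Topology ContDiff SchwartzMap Manifold

variable {E : Type*} [NormedAddCommGroup E] [NormedSpace ℝ E] [FiniteDimensional ℝ E]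
variable {F : Type*} [NormedAddCommGroup F] [NormedSpace ℝ F]

/-- A smooth compactly supported function as a Schwartz map. -/
noncomputable def toSchwartz (g : E → F) (hg : ContDiff ℝ ∞ g) (hsupp : HasCompactSupport g) :
    SchwartzMap E F where
  toFun := g
  smooth' := hg
  decay' := by
    intro k n
    set h : E → ℝ := fun x => ‖x‖ ^ k * ‖iteratedFDeriv ℝ n g x‖ with hh
    have hcont : Continuous h :=
      (continuous_norm.pow k).mul (hg.continuous_iteratedFDeriv (mod_cast le_top)).norm
    have hcs : HasCompactSupport h := by
      have h1 : HasCompactSupport (fun x => ‖iteratedFDeriv ℝ n g x‖) :=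
        (hsupp.iteratedFDeriv n).norm
      exact h1.mul_left
    obtain ⟨C, hC⟩ := hcs.exists_bound_of_continuous hcont
    exact ⟨C, fun x => (le_abs_self _).trans ((Real.norm_eq_abs _ ▸ hC x : |h x| ≤ C))⟩

omit [FiniteDimensional ℝ E] in
@[simp] lemma toSchwartz_apply (g : E → F) (hg : ContDiff ℝ ∞ g) (hsupp : HasCompactSupport g)
    (x : E) : toSchwartz g hg hsupp x = g x := rfl

variable [MeasurableSpace E] [BorelSpace E]

lemma measure_ext_of_schwartz (Q₀ Q₁ : Measure E)
    [IsProbabilityMeasure Q₀] [IsProbabilityMeasure Q₁]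
    (h : ∀ f : 𝓢(E, ℂ), ∫ x, f x ∂Q₀ = ∫ x, f x ∂Q₁) : Q₀ = Q₁ := by
  -- real-valued version
  have hreal : ∀ g : E → ℝ, ContDiff ℝ ∞ g → HasCompactSupport g →
      ∫ x, g x ∂Q₀ = ∫ x, g x ∂Q₁ := by
    intro g hg hsupp
    have hgc : ContDiff ℝ ∞ (fun x => (g x : ℂ)) := Complex.ofRealCLM.contDiff.comp hg
    have hsc : HasCompactSupport (fun x => (g x : ℂ)) := by
      show HasCompactSupport (Complex.ofReal ∘ g)
      exact hsupp.comp_left Complex.ofReal_zero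
    have := h (toSchwartz (fun x => (g x : ℂ)) hgc hsc)
    simp only [toSchwartz_apply] at this
    apply Complex.ofReal_inj.mp
    calc ((∫ x, g x ∂Q₀ : ℝ) : ℂ) = ∫ x, ((g x : ℝ) : ℂ) ∂Q₀ := (integral_ofReal (𝕜 := ℂ)).symm
      _ = ∫ x, ((g x : ℝ) : ℂ) ∂Q₁ := this
      _ = ((∫ x, g x ∂Q₁ : ℝ) : ℂ) := integral_ofReal (𝕜 := ℂ)
  -- compact sets
  have hcompact : ∀ K : Set E, IsCompact K → Q₀ K = Q₁ K := by
    intro K hK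
    have key : ∀ (μ ν : Measure E), IsProbabilityMeasure μ → IsProbabilityMeasure ν →
        (∀ g : E → ℝ, ContDiff ℝ ∞ g → HasCompactSupport g →
          ∫ x, g x ∂μ = ∫ x, g x ∂ν) → (μ K).toReal ≤ (ν K).toReal := by
      intro μ ν hμ hν hint
      haveI := hμ; haveI := hν
      have step : ∀ n : ℕ, (μ K).toReal ≤ (ν (cthickening (1 / (n + 1)) K)).toReal := by
        intro n
        set δ : ℝ := 1 / (n + 1) with hδ
        have hδpos : 0 < δ := by positivity
        set s : Set E := {x | ENNReal.ofReal δ ≤ Metric.infEDist x K} with hs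
        have hs_closed : IsClosed s :=
          isClosed_le continuous_const Metric.continuous_infEDist
        have hdisj : Disjoint s K := by
          rw [Set.disjoint_left]
          intro x hxs hxK
          rw [hs, mem_setOf_eq, EMetric.infEdist_zero_of_mem hxK] at hxs
          exact absurd hxs (by simp [ENNReal.ofReal_pos.mpr hδpos,
            (ENNReal.ofReal_pos.mpr hδpos).ne'])
        obtain ⟨f, hf0, hf1, hf01⟩ :=
          exists_contMDiffMap_zero_one_of_isClosed (𝓘(ℝ, E)) (n := ⊤) hs_closed hK.isClosed hdisj
        have hfsmooth : ContDiff ℝ ∞ (f : E → ℝ) := by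
          have := f.contMDiff
          rw [contMDiff_iff_contDiff] at this
          exact_mod_cast this
        have hfsupp : HasCompactSupport (f : E → ℝ) := by
          apply HasCompactSupport.of_support_subset_isCompact (hK.cthickening (r := δ))
          intro x hx
          rw [Metric.mem_cthickening_iff]
          by_contra hxc
          exact Function.mem_support.mp hx
            (by simpa using hf0 (le_of_lt (lt_of_not_ge hxc)))
        have hint1 : Integrable (f : E → ℝ) μ :=
          integrable_of_le_one μ (hfsmooth.continuous.aestronglyMeasurable)
            (fun x => (hf01 x).1) (fun x => (hf01 x).2)
        have hint2 : Integrable (f : E → ℝ) ν :=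
          integrable_of_le_one ν (hfsmooth.continuous.aestronglyMeasurable)
            (fun x => (hf01 x).1) (fun x => (hf01 x).2)
        have lower : (μ K).toReal ≤ ∫ x, f x ∂μ := by
          have hmono : ∀ x, K.indicator (fun _ => (1:ℝ)) x ≤ f x := by
            intro x
            by_cases hx : x ∈ K
            · rw [indicator_of_mem hx]
              exact le_of_eq (hf1 hx).symm
            · rw [indicator_of_notMem hx]; exact (hf01 x).1
          have := integral_mono ((integrable_const _).indicator hK.isClosed.measurableSet)
            hint1 hmono
          rwa [integral_indicator_const _ hK.isClosed.measurableSet, smul_eq_mul, mul_one]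
            at this
        have upper : ∫ x, f x ∂ν ≤ (ν (cthickening δ K)).toReal := by
          have hmono : ∀ x, f x ≤ (cthickening δ K).indicator (fun _ => (1:ℝ)) x := by
            intro x
            by_cases hx : x ∈ cthickening δ K
            · rw [indicator_of_mem hx]; exact (hf01 x).2
            · rw [indicator_of_notMem hx]
              have : x ∈ s := by
                rw [hs, mem_setOf_eq]
                rw [Metric.mem_cthickening_iff, not_le] at hx
                exact hx.le
              exact le_of_eq (hf0 this)
          have := integral_mono hint2
            ((integrable_const _).indicator (isClosed_cthickening).measurableSet) hmono
          rwa [integral_indicator_const _ (isClosed_cthickening).measurableSet, smul_eq_mul,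
            mul_one] at this
        calc (μ K).toReal ≤ ∫ x, f x ∂μ := lower
          _ = ∫ x, f x ∂ν := hint _ hfsmooth hfsupp
          _ ≤ (ν (cthickening δ K)).toReal := upper
      -- pass to the limit
      have htend : Tendsto (fun n : ℕ => (ν (cthickening (1 / (n + 1)) K)).toReal) atTop
          (𝓝 ((ν K).toReal)) := by
        have h1 : Tendsto (fun n : ℕ => (1 : ℝ) / (n + 1)) atTop (𝓝 0) :=
          tendsto_one_div_add_atTop_nhds_zero_nat
        have h2 := (tendsto_measure_cthickening_of_isCompact (μ := ν) hK).comp h1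
        exact (ENNReal.tendsto_toReal (measure_ne_top _ _)).comp h2
      exact ge_of_tendsto' htend step
    have h0 := key Q₀ Q₁ inferInstance inferInstance hreal
    have h1 := key Q₁ Q₀ inferInstance inferInstance
      (fun g hg hs => (hreal g hg hs).symm)
    exact (ENNReal.toReal_eq_toReal_iff' (measure_ne_top _ _) (measure_ne_top _ _)).mp
      (le_antisymm h0 h1)
  -- closed sets
  have hclosed : ∀ G : Set E, IsClosed G → Q₀ G = Q₁ G := by
    intro G hG
    have hunion : (⋃ n : ℕ, G ∩ closedBall 0 n) = G := by
      ext x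
      simp only [mem_iUnion, mem_inter_iff, mem_closedBall, dist_zero_right]
      constructor
      · rintro ⟨n, hn, -⟩; exact hn
      · intro hx
        obtain ⟨n, hn⟩ := exists_nat_ge ‖x‖
        exact ⟨n, hx, hn⟩
    have hmono : Monotone (fun n : ℕ => G ∩ closedBall (0:E) n) := by
      intro i j hij
      apply inter_subset_inter_right
      exact closedBall_subset_closedBall (by exact_mod_cast hij)
    have ht0 : Tendsto (fun n : ℕ => Q₀ (G ∩ closedBall 0 n)) atTop (𝓝 (Q₀ G)) := by
      have := tendsto_measure_iUnion_atTop (μ := Q₀) hmono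
      rwa [hunion] at this
    have ht1 : Tendsto (fun n : ℕ => Q₁ (G ∩ closedBall 0 n)) atTop (𝓝 (Q₁ G)) := by
      have := tendsto_measure_iUnion_atTop (μ := Q₁) hmono
      rwa [hunion] at this
    have heq : ∀ n : ℕ, Q₀ (G ∩ closedBall 0 n) = Q₁ (G ∩ closedBall 0 n) := fun n =>
      hcompact _ ((isCompact_closedBall 0 n).inter_left hG)
    simp only [heq] at ht0
    exact tendsto_nhds_unique ht0 ht1
  -- conclude
  refine MeasureTheory.ext_of_generate_finite _ ?_ isPiSystem_isClosed
    (fun G hGs => hclosed G hGs) (hclosed univ isClosed_univ)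
  rw [BorelSpace.measurable_eq (α := E), borel_eq_generateFrom_isClosed]

end SchwartzExt

section Euclidean

open Real hiding sigmoid sigmoid_pos sigmoid_nonneg sigmoid_le_one
open Metric Set Filter
open scoped FourierTransform Topology ContDiff SchwartzMap Manifold RealInnerProductSpace

variable {m : ℕ}

local notation "V" => EuclideanSpace ℝ (Fin m)

lemma innerLflip : (innerₗ (V)).flip = innerₗ (V) := by
  apply LinearMap.ext; intro x; apply LinearMap.ext; intro y
  simp only [LinearMap.flip_apply, innerₗ_apply_apply]
  exact real_inner_comm x y

/-- characteristic-type integral of a measure -/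
noncomputable def charFn (Q : Measure (EuclideanSpace ℝ (Fin m))) (x : EuclideanSpace ℝ (Fin m)) :
    ℂ :=
  VectorFourier.fourierIntegral Real.fourierChar Q (innerₗ (V)) (fun _ => (1 : ℂ)) x

lemma integral_fourier_eq_integral_charFn (Q : Measure (EuclideanSpace ℝ (Fin m)))
    [IsProbabilityMeasure Q] (g : 𝓢(EuclideanSpace ℝ (Fin m), ℂ)) :
    ∫ ξ, 𝓕 (⇑g) ξ ∂Q = ∫ x, g x • charFn Q x := by
  have h := VectorFourier.integral_fourierIntegral_smul_eq_flip (e := Real.fourierChar)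
    (μ := (volume : Measure (V))) (ν := Q) (L := innerₗ (V))
    Real.continuous_fourierChar continuous_inner g.integrable (integrable_const (1 : ℂ))
  rw [innerLflip] at h
  simp only [smul_eq_mul, mul_one] at h
  exact h

lemma charFn_eq (Q₀ Q₁ : Measure (EuclideanSpace ℝ (Fin m)))
    [IsProbabilityMeasure Q₀] [IsProbabilityMeasure Q₁]
    (hmap : ∀ θ : V, Q₀.map (fun ξ => ⟪ξ, θ⟫) = Q₁.map (fun ξ => ⟪ξ, θ⟫)) :
    charFn Q₀ = charFn Q₁ := by
  funext x
  have hk : Continuous (fun s : ℝ => (Real.fourierChar (-s) : Circle) • (1 : ℂ)) :=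
    (Real.continuous_fourierChar.comp continuous_neg).smul continuous_const
  have hl : Continuous (fun ξ : V => ⟪ξ, x⟫) := continuous_inner.comp
    (continuous_id.prodMk continuous_const)
  have key : ∀ Q : Measure (V), charFn Q x
      = ∫ s, (Real.fourierChar (-s) : Circle) • (1 : ℂ) ∂(Q.map (fun ξ => ⟪ξ, x⟫)) := by
    intro Q
    rw [integral_map hl.aemeasurable hk.aestronglyMeasurable]
    rfl
  rw [key, key, hmap x]

theorem euclidean_eq_of_sigmoid_eq (Q₀ Q₁ : Measure (EuclideanSpace ℝ (Fin m)))
    [IsProbabilityMeasure Q₀] [IsProbabilityMeasure Q₁]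
    (hsig : ∀ (θ : EuclideanSpace ℝ (Fin m)) (c : ℝ),
      ∫ ξ, sigmoid (⟪ξ, θ⟫ + c) ∂Q₀ = ∫ ξ, sigmoid (⟪ξ, θ⟫ + c) ∂Q₁) : Q₀ = Q₁ := by
  have hmap : ∀ θ : V, Q₀.map (fun ξ => ⟪ξ, θ⟫) = Q₁.map (fun ξ => ⟪ξ, θ⟫) := by
    intro θ
    have hl : Continuous (fun ξ : V => ⟪ξ, θ⟫) := continuous_inner.comp
      (continuous_id.prodMk continuous_const)
    haveI : IsProbabilityMeasure (Q₀.map (fun ξ => ⟪ξ, θ⟫)) :=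
      Measure.isProbabilityMeasure_map hl.aemeasurable
    haveI : IsProbabilityMeasure (Q₁.map (fun ξ => ⟪ξ, θ⟫)) :=
      Measure.isProbabilityMeasure_map hl.aemeasurable
    apply measure_eq_of_sigmoid_eq
    intro s c
    have hsm : Continuous (fun x : ℝ => sigmoid (s * x + c)) := by
      apply continuous_sigmoid'.comp; continuity
    rw [integral_map hl.aemeasurable hsm.aestronglyMeasurable,
      integral_map hl.aemeasurable hsm.aestronglyMeasurable]
    have : ∀ ξ : V, s * ⟪ξ, θ⟫ + c = ⟪ξ, s • θ⟫ + c := by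
      intro ξ; rw [real_inner_smul_right]
    simp only [this]
    exact hsig (s • θ) c
  have hchar := charFn_eq Q₀ Q₁ hmap
  apply measure_ext_of_schwartz
  intro f
  set g : 𝓢(V, ℂ) := (SchwartzMap.fourierTransformCLE ℂ 𝓢(V, ℂ)).symm f with hg
  have hfg : ⇑f = 𝓕 ⇑g := by
    conv_lhs => rw [← (SchwartzMap.fourierTransformCLE ℂ 𝓢(V, ℂ)).apply_symm_apply f]
    rw [← hg]; rfl
  rw [hfg, integral_fourier_eq_integral_charFn Q₀ g, integral_fourier_eq_integral_charFn Q₁ g,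
    hchar]

end Euclidean

section Main

open Real hiding sigmoid sigmoid_pos sigmoid_nonneg sigmoid_le_one
open Metric Set Filter
open scoped Topology SchwartzMap RealInnerProductSpace

lemma abs_integral_sigmoid_le {m : ℕ} (P : Measure (Fin m → ℝ)) [IsProbabilityMeasure P]
    (θ : Fin m → ℝ) (c : ℝ) :
    |∫ z, sigmoid ((∑ i, θ i * z i) + c) ∂P| ≤ 1 := by
  have hcont : Continuous (fun z : Fin m → ℝ => (∑ i, θ i * z i) + c) := by
    apply Continuous.add _ continuous_const
    exact continuous_finset_sum _ (fun i _ => continuous_const.mul (continuous_apply i))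
  have hint : Integrable (fun z => sigmoid ((∑ i, θ i * z i) + c)) P :=
    integrable_sigmoid_comp _ hcont
  rw [abs_le]
  constructor
  · have : (0:ℝ) ≤ ∫ z, sigmoid ((∑ i, θ i * z i) + c) ∂P :=
      integral_nonneg (fun z => sigmoid_nonneg _)
    linarith
  · have := integral_mono hint (integrable_const (1:ℝ)) (fun z => sigmoid_le_one _)
    rwa [integral_const, probReal_univ, one_smul] at this

/-- the sigmoid IPM between two Borel probability measures on `ℝ^m`
vanishes if and only if the measures coincide. -/
theorem sigmoidIPM_eq_zero_iff {m : ℕ} (P₀ P₁ : Measure (Fin m → ℝ))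
    [IsProbabilityMeasure P₀] [IsProbabilityMeasure P₁] :
    sigmoidIPM P₀ P₁ = 0 ↔ P₀ = P₁ := by
  constructor
  · intro hd
    -- pointwise equality of sigmoid integrals
    have hbdd : BddAbove (Set.range fun p : (Fin m → ℝ) × ℝ =>
        |(∫ z, sigmoid ((∑ i, p.1 i * z i) + p.2) ∂P₀) -
          ∫ z, sigmoid ((∑ i, p.1 i * z i) + p.2) ∂P₁|) := by
      refine ⟨2, ?_⟩
      rintro x ⟨p, rfl⟩
      calc |(∫ z, sigmoid ((∑ i, p.1 i * z i) + p.2) ∂P₀) -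
            ∫ z, sigmoid ((∑ i, p.1 i * z i) + p.2) ∂P₁|
          ≤ |∫ z, sigmoid ((∑ i, p.1 i * z i) + p.2) ∂P₀| +
            |∫ z, sigmoid ((∑ i, p.1 i * z i) + p.2) ∂P₁| := abs_sub _ _
        _ ≤ 1 + 1 := add_le_add (abs_integral_sigmoid_le P₀ _ _) (abs_integral_sigmoid_le P₁ _ _)
        _ = 2 := by norm_num
    have hEq : ∀ (θ : Fin m → ℝ) (c : ℝ),
        ∫ z, sigmoid ((∑ i, θ i * z i) + c) ∂P₀ =
          ∫ z, sigmoid ((∑ i, θ i * z i) + c) ∂P₁ := by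
      intro θ c
      have hle := le_ciSup hbdd (θ, c)
      rw [show (⨆ p : (Fin m → ℝ) × ℝ,
        |(∫ z, sigmoid ((∑ i, p.1 i * z i) + p.2) ∂P₀) -
          ∫ z, sigmoid ((∑ i, p.1 i * z i) + p.2) ∂P₁|) = sigmoidIPM P₀ P₁ from rfl, hd] at hle
      have := abs_nonneg ((∫ z, sigmoid ((∑ i, θ i * z i) + c) ∂P₀) -
          ∫ z, sigmoid ((∑ i, θ i * z i) + c) ∂P₁)
      have habs : |(∫ z, sigmoid ((∑ i, θ i * z i) + c) ∂P₀) -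
          ∫ z, sigmoid ((∑ i, θ i * z i) + c) ∂P₁| = 0 := le_antisymm hle this
      have := abs_eq_zero.mp habs
      linarith [sub_eq_zero.mp this]
    -- transfer to Euclidean space
    set eL : (Fin m → ℝ) ≃L[ℝ] EuclideanSpace ℝ (Fin m) :=
      (EuclideanSpace.equiv (Fin m) ℝ).symm with heL
    set Q₀ : Measure (EuclideanSpace ℝ (Fin m)) := P₀.map eL with hQ₀
    set Q₁ : Measure (EuclideanSpace ℝ (Fin m)) := P₁.map eL with hQ₁
    haveI : IsProbabilityMeasure Q₀ := Measure.isProbabilityMeasure_map eL.continuous.measurable.aemeasurable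
    haveI : IsProbabilityMeasure Q₁ := Measure.isProbabilityMeasure_map eL.continuous.measurable.aemeasurable
    have hQ : Q₀ = Q₁ := by
      apply euclidean_eq_of_sigmoid_eq
      intro θ c
      have hcont : Continuous (fun ξ : EuclideanSpace ℝ (Fin m) => sigmoid (⟪ξ, θ⟫ + c)) := by
        apply continuous_sigmoid'.comp
        exact (continuous_inner.comp (continuous_id.prodMk continuous_const)).add
          continuous_const
      rw [hQ₀, hQ₁, integral_map eL.continuous.measurable.aemeasurable
        hcont.aestronglyMeasurable, integral_map eL.continuous.measurable.aemeasurable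
        hcont.aestronglyMeasurable]
      have hinner : ∀ z : Fin m → ℝ, ⟪(eL z : EuclideanSpace ℝ (Fin m)), θ⟫
          = ∑ i, (fun i => θ i) i * z i := by
        intro z
        rw [PiLp.inner_apply]
        apply Finset.sum_congr rfl
        intro i _
        simp [heL, RCLike.inner_apply, mul_comm]
      simp only [hinner]
      exact hEq (fun i => θ i) c
    -- transfer back
    have hmm : ∀ (P : Measure (Fin m → ℝ)), (P.map eL).map eL.symm = P := by
      intro P
      rw [Measure.map_map eL.symm.continuous.measurable eL.continuous.measurable]
      have : (eL.symm ∘ eL : (Fin m → ℝ) → (Fin m → ℝ)) = id := by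
        funext z; simp
      rw [this, Measure.map_id]
    calc P₀ = (P₀.map eL).map eL.symm := (hmm P₀).symm
      _ = (P₁.map eL).map eL.symm := by rw [← hQ₀, ← hQ₁, hQ]
      _ = P₁ := hmm P₁
  · intro h
    rw [sigmoidIPM, h]
    simp only [sub_self, abs_zero]
    exact ciSup_const

end Main
end

section
/- Let r₁, r₂ ∈ ℕ, set r = r₁ + r₂, and let λᵢ = −1 + 2i/r for i = 0, 1, …, r. Then there exists a vector (β₀, β₁, …, β_r) ∈ ℝ^{r+1} such that Σ_{i=0}^{r} βᵢ (x + λᵢ y)^r = x^{r₁} y^{r₂} for all x, y ∈ ℝ, and Σ_{i=0}^{r} |βᵢ| < e^r. -/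
open Polynomial Finset Nat

lemma factB (n : ℕ) : ∏ j ∈ Finset.range n, (j+1) = n ! := by
  induction n with
  | zero => simp
  | succ n ih => rw [Finset.prod_range_succ, ih, Nat.factorial_succ, mul_comm]

lemma factA (i : ℕ) : ∏ j ∈ Finset.range i, (i - j) = i ! := by
  rw [← Finset.prod_range_reflect]
  rw [← factB i]
  refine Finset.prod_congr rfl fun j hj => ?_
  have := Finset.mem_range.mp hj
  omega

lemma coeff_prod_X_sub_C_le {ι : Type*} [DecidableEq ι] (s : Finset ι) (b : ι → ℝ) :
    (∀ j ∈ s, |b j| ≤ 1) → ∀ k, |(∏ j ∈ s, (X - C (b j))).coeff k| ≤ ((s.card).choose k : ℝ) := by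
  induction s using Finset.induction_on with
  | empty => intro _ k; cases k <;> simp [Polynomial.coeff_one]
  | insert a s ha ih =>
    intro hb k
    have hq := ih (fun j hj => hb j (Finset.mem_insert_of_mem hj))
    rw [Finset.prod_insert ha, Finset.card_insert_of_notMem ha, mul_comm]
    have hba : |b a| ≤ 1 := hb a (Finset.mem_insert_self a s)
    set q := ∏ j ∈ s, (X - C (b j)) with hqdef
    cases k with
    | zero =>
      rw [Polynomial.mul_coeff_zero]
      have : (X - C (b a)).coeff 0 = -(b a) := by simp
      rw [this]
      calc |q.coeff 0 * -(b a)| = |q.coeff 0| * |b a| := by rw [abs_mul, abs_neg]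
        _ ≤ (s.card.choose 0 : ℝ) * 1 := by
            exact mul_le_mul (hq 0) hba (abs_nonneg _) (by positivity)
        _ ≤ ((s.card+1).choose 0 : ℝ) := by simp
    | succ k =>
      rw [Polynomial.coeff_mul_X_sub_C]
      calc |q.coeff k - q.coeff (k+1) * b a| ≤ |q.coeff k| + |q.coeff (k+1)| * |b a| := by
            rw [← abs_mul]; exact abs_sub _ _
        _ ≤ (s.card.choose k : ℝ) + (s.card.choose (k+1) : ℝ) * 1 := by
            gcongr; exact hq k; exact hq (k+1)
        _ = ((s.card+1).choose (k+1) : ℝ) := by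
            rw [mul_one, Nat.choose_succ_succ]; push_cast; ring

lemma prod_dist (r : ℕ) (i : Fin (r+1)) :
    ∏ j ∈ (univ : Finset (Fin (r+1))).erase i, |(((i:ℕ):ℕ):ℝ) - ((j:ℕ):ℝ)|
      = ((i:ℕ)! : ℝ) * ((r - (i:ℕ))! : ℝ) := by
  set m : ℕ := (i : ℕ) with hm
  set g : ℕ → ℝ := fun j => if j = m then 1 else |(m:ℝ) - (j:ℝ)| with hg
  have h1 : ∏ j ∈ (univ : Finset (Fin (r+1))).erase i, |(m:ℝ) - ((j:ℕ):ℝ)|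
      = ∏ j : Fin (r+1), g (j:ℕ) := by
    rw [← Finset.mul_prod_erase univ (fun j : Fin (r+1) => g (j:ℕ)) (mem_univ i)]
    have : g (i:ℕ) = 1 := by simp [hg, hm]
    rw [this, one_mul]
    refine (Finset.prod_congr rfl fun j hj => ?_).symm
    have hne : (j:ℕ) ≠ m := by
      have := (Finset.mem_erase.mp hj).1
      simpa [hm, Fin.val_eq_val] using this
    simp [hg, hne]
  have h2 : ∏ j : Fin (r+1), g (j:ℕ) = ∏ j ∈ Finset.range (r+1), g j :=
    Fin.prod_univ_eq_prod_range g (r+1)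
  have hmem : m ∈ Finset.range (r+1) := Finset.mem_range.mpr i.isLt
  have h3 : ∏ j ∈ Finset.range (r+1), g j
      = ∏ j ∈ (Finset.range (r+1)).erase m, |(m:ℝ) - (j:ℝ)| := by
    rw [← Finset.mul_prod_erase _ g hmem]
    have : g m = 1 := by simp [hg]
    rw [this, one_mul]
    refine Finset.prod_congr rfl fun j hj => ?_
    have hne := (Finset.mem_erase.mp hj).1
    simp [hg, hne]
  have hsplit : (Finset.range (r+1)).erase m = Finset.range m ∪ Finset.Ico (m+1) (r+1) := by
    ext j
    simp only [Finset.mem_erase, Finset.mem_range, Finset.mem_union, Finset.mem_Ico]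
    have : m ≤ r := Nat.lt_succ_iff.mp i.isLt
    omega
  have hdisj : Disjoint (Finset.range m) (Finset.Ico (m+1) (r+1)) := by
    simp only [Finset.disjoint_left, Finset.mem_range, Finset.mem_Ico]
    omega
  have h5 : ∏ j ∈ Finset.range m, |(m:ℝ) - (j:ℝ)| = (m ! : ℝ) := by
    have : ∀ j ∈ Finset.range m, |(m:ℝ) - (j:ℝ)| = ((m - j : ℕ) : ℝ) := by
      intro j hj
      have hj' := Finset.mem_range.mp hj
      rw [Nat.cast_sub hj'.le, abs_of_nonneg]
      have : (j:ℝ) ≤ (m:ℝ) := by exact_mod_cast hj'.le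
      linarith
    rw [Finset.prod_congr rfl this, ← Nat.cast_prod, factA]
  have h6 : ∏ j ∈ Finset.Ico (m+1) (r+1), |(m:ℝ) - (j:ℝ)| = ((r - m)! : ℝ) := by
    rw [Finset.prod_Ico_eq_prod_range]
    have heq : ∀ j ∈ Finset.range (r+1-(m+1)), |(m:ℝ) - ((m+1+j : ℕ):ℝ)| = ((j+1 : ℕ):ℝ) := by
      intro j _
      push_cast
      rw [abs_of_nonpos] <;> [push_cast; skip] <;> ring_nf <;> push_cast <;> linarith
    rw [Finset.prod_congr rfl heq, ← Nat.cast_prod, factB,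
      show r+1-(m+1) = r - m from by omega]
  rw [h1, h2, h3, hsplit, Finset.prod_union hdisj, h5, h6]


/-- for positive integers `r₁, r₂` with `r = r₁ + r₂` and equally spaced
points `λᵢ = -1 + 2i/r` in `[-1,1]`, there is a coefficient vector `β ∈ ℝ^{r+1}` with
`Σᵢ βᵢ (x + λᵢ y)^r = x^{r₁} y^{r₂}` for all real `x, y`, and `Σᵢ |βᵢ| < e^r`. -/
theorem monomial_as_powers_of_binary_linear_forms (r₁ r₂ : ℕ) (h₁ : 1 ≤ r₁) (h₂ : 1 ≤ r₂) :
    ∃ β : Fin (r₁ + r₂ + 1) → ℝ,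
      (∀ x y : ℝ,
        ∑ i, β i * (x + (-1 + 2 * ((i : ℕ) : ℝ) / ((r₁ + r₂ : ℕ) : ℝ)) * y) ^ (r₁ + r₂)
          = x ^ r₁ * y ^ r₂) ∧
      (∑ i, |β i|) < Real.exp ((r₁ + r₂ : ℕ) : ℝ) := by
  set r := r₁ + r₂ with hrdef
  have hr : 0 < r := by omega
  have hr2 : r₂ ≤ r := by omega
  have hrR : (0:ℝ) < (r:ℝ) := by exact_mod_cast hr
  set v : Fin (r+1) → ℝ := fun i => -1 + 2 * ((i:ℕ):ℝ) / ((r:ℕ):ℝ) with hv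
  have hinj : Set.InjOn v (univ : Finset (Fin (r+1))) := by
    intro a _ b _ hab
    simp only [hv] at hab
    field_simp at hab
    exact Fin.ext (by
      have h : ((2 * (a:ℕ) : ℕ) : ℝ) = ((2 * (b:ℕ) : ℕ) : ℝ) := by push_cast at hab ⊢; linarith
      have h' : 2 * (a:ℕ) = 2 * (b:ℕ) := by exact_mod_cast h
      omega)
  have hchoose : (0:ℝ) < (r.choose r₂ : ℝ) := by exact_mod_cast Nat.choose_pos hr2
  set β : Fin (r+1) → ℝ :=
    fun i => (Lagrange.basis univ v i).coeff r₂ / (r.choose r₂ : ℝ) with hβ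
  refine ⟨β, ?_, ?_⟩
  · -- identity
    have key : ∀ k : ℕ, k ≤ r →
        ∑ i : Fin (r+1), β i * v i ^ k
          = (if r₂ = k then (1:ℝ) else 0) / (r.choose r₂ : ℝ) := by
      intro k hk
      have hdeg : (X ^ k : ℝ[X]).degree < (univ : Finset (Fin (r+1))).card := by
        rw [Polynomial.degree_X_pow, Finset.card_univ, Fintype.card_fin]
        exact_mod_cast Nat.lt_succ_of_le hk
      have hinterp := Lagrange.eq_interpolate (f := (X ^ k : ℝ[X])) hinj hdeg
      have hcoeff := congrArg (fun p : ℝ[X] => p.coeff r₂) hinterp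
      simp only [Lagrange.interpolate_apply, Polynomial.eval_pow, Polynomial.eval_X,
        Polynomial.finset_sum_coeff, Polynomial.coeff_C_mul, Polynomial.coeff_X_pow] at hcoeff
      calc ∑ i : Fin (r+1), β i * v i ^ k
          = (∑ i : Fin (r+1), v i ^ k * (Lagrange.basis univ v i).coeff r₂) / (r.choose r₂ : ℝ) := by
            rw [Finset.sum_div]
            exact Finset.sum_congr rfl fun i _ => by simp only [hβ]; ring
        _ = (if r₂ = k then (1:ℝ) else 0) / (r.choose r₂ : ℝ) := by rw [← hcoeff]
    intro x y
    show ∑ i, β i * (x + v i * y) ^ r = x ^ r₁ * y ^ r₂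
    calc ∑ i, β i * (x + v i * y)^r
        = ∑ i, ∑ k ∈ range (r+1), β i * (x^k * v i ^(r-k) * y^(r-k) * (r.choose k : ℝ)) := by
          refine Finset.sum_congr rfl fun i _ => ?_
          rw [add_pow, Finset.mul_sum]
          refine Finset.sum_congr rfl fun k _ => ?_
          rw [mul_pow]; ring
      _ = ∑ k ∈ range (r+1), (∑ i, β i * v i ^ (r-k)) * (x^k * y^(r-k) * (r.choose k : ℝ)) := by
          rw [Finset.sum_comm]
          refine Finset.sum_congr rfl fun k _ => ?_
          rw [Finset.sum_mul]
          exact Finset.sum_congr rfl fun i _ => by ring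
      _ = x ^ r₁ * y ^ r₂ := by
          rw [Finset.sum_eq_single r₁]
          · rw [key (r - r₁) (by omega), show r - r₁ = r₂ from by omega, if_pos rfl]
            have hcs : r.choose r₁ = r.choose r₂ := by
              rw [show r₂ = r - r₁ from by omega]
              exact (Nat.choose_symm (by omega)).symm
            rw [hcs]
            field_simp
          · intro k hk hne
            have hkr := Finset.mem_range.mp hk
            rw [key (r-k) (by omega), if_neg (by omega)]
            simp
          · intro h
            exact absurd (Finset.mem_range.mpr (by omega)) h
  · -- the bound
    have hbound : ∀ i : Fin (r+1),
        |β i| ≤ ((r:ℝ)/2)^r / (((i:ℕ)! : ℝ) * ((r-(i:ℕ))! : ℝ)) := by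
      intro i
      have hfac : Lagrange.basis univ v i
          = C (∏ j ∈ univ.erase i, (v i - v j)⁻¹) * ∏ j ∈ univ.erase i, (X - C (v j)) := by
        rw [Lagrange.basis]
        simp only [Lagrange.basisDivisor]
        rw [Finset.prod_mul_distrib, map_prod]
      have hcard : (univ.erase i).card = r := by
        rw [Finset.card_erase_of_mem (mem_univ i), Finset.card_univ, Fintype.card_fin]
        omega
      have hvle : ∀ j : Fin (r+1), |v j| ≤ 1 := by
        intro j
        have hj0 : (0:ℝ) ≤ ((j:ℕ):ℝ) := Nat.cast_nonneg _
        have hjr : ((j:ℕ):ℝ) ≤ (r:ℝ) := by exact_mod_cast Nat.lt_succ_iff.mp j.isLt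
        rw [abs_le]
        constructor
        · simp only [hv]
          have : (0:ℝ) ≤ 2*((j:ℕ):ℝ)/(r:ℝ) := by positivity
          linarith
        · simp only [hv]
          have : 2*((j:ℕ):ℝ)/(r:ℝ) ≤ 2 := by rw [div_le_iff₀ hrR]; linarith
          linarith
      have hcoefbd : |(∏ j ∈ univ.erase i, (X - C (v j))).coeff r₂| ≤ (r.choose r₂ : ℝ) := by
        have h := coeff_prod_X_sub_C_le (univ.erase i) (fun j => v j) (fun j _ => hvle j) r₂
        rwa [hcard] at h
      have hprod : ∏ j ∈ univ.erase i, |v i - v j|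
          = (2/(r:ℝ))^r * (((i:ℕ)! : ℝ) * ((r-(i:ℕ))! : ℝ)) := by
        have hst : ∀ j ∈ univ.erase i,
            |v i - v j| = (2/(r:ℝ)) * |((i:ℕ):ℝ) - ((j:ℕ):ℝ)| := by
          intro j _
          simp only [hv]
          rw [show (-1 + 2*((i:ℕ):ℝ)/(r:ℝ)) - (-1 + 2*((j:ℕ):ℝ)/(r:ℝ))
              = (2/(r:ℝ)) * (((i:ℕ):ℝ) - ((j:ℕ):ℝ)) by field_simp; ring]
          rw [abs_mul, abs_of_pos (by positivity)]
        rw [Finset.prod_congr rfl hst, Finset.prod_mul_distrib, Finset.prod_const, hcard,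
          prod_dist r i]
      have hfi : (0:ℝ) < ((i:ℕ)! : ℝ) := by exact_mod_cast Nat.factorial_pos _
      have hfri : (0:ℝ) < ((r-(i:ℕ))! : ℝ) := by exact_mod_cast Nat.factorial_pos _
      have hb1 : |(Lagrange.basis univ v i).coeff r₂|
          = ((2/(r:ℝ))^r * (((i:ℕ)! : ℝ) * ((r-(i:ℕ))! : ℝ)))⁻¹
            * |(∏ j ∈ univ.erase i, (X - C (v j))).coeff r₂| := by
        rw [hfac, Polynomial.coeff_C_mul, abs_mul, ← hprod]
        congr 1
        rw [Finset.abs_prod, ← Finset.prod_inv_distrib]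
        exact Finset.prod_congr rfl fun j _ => (abs_inv _)
      have habs : |β i| = |(Lagrange.basis univ v i).coeff r₂| / (r.choose r₂ : ℝ) := by
        simp only [hβ, abs_div, abs_of_pos hchoose]
      have h2 : ((2/(r:ℝ))^r * (((i:ℕ)! : ℝ) * ((r-(i:ℕ))! : ℝ)))⁻¹
          = ((r:ℝ)/2)^r / (((i:ℕ)! : ℝ) * ((r-(i:ℕ))! : ℝ)) := by
        rw [mul_inv, ← inv_pow, inv_div]; ring
      rw [habs, hb1, h2]
      calc ((r:ℝ)/2)^r / (((i:ℕ)! : ℝ) * ((r-(i:ℕ))! : ℝ))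
            * |(∏ j ∈ univ.erase i, (X - C (v j))).coeff r₂| / (r.choose r₂ : ℝ)
          = (((r:ℝ)/2)^r / (((i:ℕ)! : ℝ) * ((r-(i:ℕ))! : ℝ)))
            * (|(∏ j ∈ univ.erase i, (X - C (v j))).coeff r₂| / (r.choose r₂ : ℝ)) := by
            ring
        _ ≤ (((r:ℝ)/2)^r / (((i:ℕ)! : ℝ) * ((r-(i:ℕ))! : ℝ))) * 1 := by
            exact mul_le_mul_of_nonneg_left ((div_le_one hchoose).mpr hcoefbd) (by positivity)
        _ = ((r:ℝ)/2)^r / (((i:ℕ)! : ℝ) * ((r-(i:ℕ))! : ℝ)) := mul_one _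
    have hfr : (0:ℝ) < ((r)! : ℝ) := by exact_mod_cast Nat.factorial_pos r
    have hsum : ∑ i : Fin (r+1), ((r:ℝ)/2)^r / (((i:ℕ)! : ℝ) * ((r-(i:ℕ))! : ℝ))
        = (r:ℝ)^r / ((r)! : ℝ) := by
      rw [Fin.sum_univ_eq_sum_range (fun m => ((r:ℝ)/2)^r / ((m ! : ℝ) * ((r-m)! : ℝ))) (r+1)]
      have hterm : ∀ m ∈ range (r+1),
          ((r:ℝ)/2)^r / ((m ! : ℝ) * ((r-m)! : ℝ))
            = ((r:ℝ)/2)^r * ((r.choose m : ℝ) / ((r)! : ℝ)) := by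
        intro m hm
        have hmr : m ≤ r := Nat.lt_succ_iff.mp (Finset.mem_range.mp hm)
        have hfm : (0:ℝ) < (m ! : ℝ) := by exact_mod_cast Nat.factorial_pos m
        have hfrm : (0:ℝ) < ((r-m)! : ℝ) := by exact_mod_cast Nat.factorial_pos (r-m)
        have hkey : (r.choose m : ℝ) * ((m ! : ℝ) * ((r-m)! : ℝ)) = ((r)! : ℝ) := by
          rw [← mul_assoc]
          exact_mod_cast congrArg (Nat.cast : ℕ → ℝ) (Nat.choose_mul_factorial_mul_factorial hmr)
        have hq : (r.choose m : ℝ) / ((r)! : ℝ) = 1 / ((m ! : ℝ) * ((r-m)! : ℝ)) := by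
          rw [div_eq_div_iff hfr.ne' (by positivity : ((m ! : ℝ) * ((r-m)! : ℝ)) ≠ 0), one_mul]
          exact hkey
        rw [hq]
        ring
      rw [Finset.sum_congr rfl hterm, ← Finset.mul_sum, ← Finset.sum_div,
        ← Nat.cast_sum, Nat.sum_range_choose]
      rw [show ((r:ℝ)/2)^r * (((2^r : ℕ) : ℝ)/((r)! : ℝ)) = (((r:ℝ)/2)*2)^r/((r)! : ℝ) by
        push_cast; rw [mul_pow]; ring]
      norm_num
    have hlt : (r:ℝ)^r / ((r)! : ℝ) < Real.exp ((r:ℕ):ℝ) := by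
      have hs := Real.sum_le_exp_of_nonneg hrR.le (r+1)
      have hsub : ({0, r} : Finset ℕ) ⊆ range (r+1) := by
        intro k hk
        simp only [Finset.mem_insert, Finset.mem_singleton] at hk
        rcases hk with rfl|rfl <;> simp [Finset.mem_range] <;> omega
      have hge := Finset.sum_le_sum_of_subset_of_nonneg (f := fun k : ℕ => (r:ℝ)^k/(k ! : ℝ)) hsub (fun k _ _ => by positivity)
      rw [Finset.sum_pair (show (0:ℕ) ≠ r by omega)] at hge
      norm_num at hge
      linarith
    calc ∑ i, |β i| ≤ ∑ i : Fin (r+1), ((r:ℝ)/2)^r / (((i:ℕ)! : ℝ) * ((r-(i:ℕ))! : ℝ)) :=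
          Finset.sum_le_sum fun i _ => hbound i
      _ = (r:ℝ)^r / ((r)! : ℝ) := hsum
      _ < Real.exp ((r:ℕ):ℝ) := hlt
end

section
/- Let r ∈ ℕ with r ≥ 1 and let λᵢ = −1 + 2i/r for i = 0, 1, …, r. Then for every i ∈ {0, 1, …, r}, the product ∏_{j ≠ i} |λᵢ − λⱼ| (over j ∈ {0,…,r} with j ≠ i) satisfies ∏_{j ≠ i} |λᵢ − λⱼ| > (r+1) e^{−r}. -/
open Finset Real Filter Nat

lemma sqrt_pi_le_stirlingSeq (k : ℕ) : Real.sqrt π ≤ Stirling.stirlingSeq (k + 1) := by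
  have ht : Tendsto (Stirling.stirlingSeq ∘ Nat.succ) atTop (nhds (Real.sqrt π)) :=
    Stirling.tendsto_stirlingSeq_sqrt_pi.comp (tendsto_add_atTop_nat 1)
  exact Stirling.stirlingSeq'_antitone.le_of_tendsto ht k

lemma stirling_lb (m : ℕ) (hm : 1 ≤ m) :
    Real.sqrt π * (Real.sqrt (2 * m) * ((m : ℝ) / Real.exp 1) ^ m) ≤ (m ! : ℝ) := by
  obtain ⟨k, rfl⟩ : ∃ k, m = k + 1 := ⟨m - 1, by omega⟩
  have h := sqrt_pi_le_stirlingSeq k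
  rw [Stirling.stirlingSeq] at h
  have hden : 0 < Real.sqrt (2 * (↑(k+1) : ℝ)) * ((↑(k+1) : ℝ) / Real.exp 1) ^ (k+1) := by
    positivity
  calc Real.sqrt π * (Real.sqrt (2 * ↑(k+1)) * ((↑(k+1) : ℝ) / Real.exp 1) ^ (k+1))
      ≤ ((k+1)! / (Real.sqrt (2 * ↑(k+1)) * ((↑(k+1):ℝ) / Real.exp 1) ^ (k+1))) *
        (Real.sqrt (2 * ↑(k+1)) * ((↑(k+1):ℝ) / Real.exp 1) ^ (k+1)) :=
        mul_le_mul_of_nonneg_right h hden.le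
    _ = ((k+1)! : ℝ) := div_mul_cancel₀ _ hden.ne'

set_option maxHeartbeats 1000000 in
lemma key_center (r : ℕ) (hr : 1 ≤ r) :
    ((r : ℝ) + 1) * (r : ℝ) ^ r < 2 ^ r * (((r / 2)! * (r - r / 2)! : ℕ) : ℝ) * Real.exp r := by
  rcases Nat.even_or_odd r with ⟨m, rfl⟩ | ⟨m, rfl⟩
  · -- r = m + m
    have hm : 1 ≤ m := by omega
    have hd : (m + m) / 2 = m := by omega
    have hs : m + m - m = m := by omega
    rw [hd, hs]
    set x : ℝ := (m : ℝ) with hx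
    have hx1 : (1 : ℝ) ≤ x := by rw [hx]; exact_mod_cast hm
    have e1 := Real.exp_pos 1
    set S : ℝ := Real.sqrt π * (Real.sqrt (2 * x) * (x / Real.exp 1) ^ m) with hS
    have hS0 : 0 ≤ S := by positivity
    have hSm : S ≤ (m ! : ℝ) := stirling_lb m hm
    have hsq : S * S ≤ (m ! : ℝ) * (m ! : ℝ) :=
      mul_le_mul hSm hSm hS0 (Nat.cast_nonneg _)
    have hdiv : (x / Real.exp 1) ^ m * (x / Real.exp 1) ^ m * Real.exp 1 ^ (m + m)
        = x ^ (m + m) := by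
      rw [← pow_add, div_pow, div_mul_cancel₀]
      positivity
    have hpi : Real.sqrt π * Real.sqrt π = π := Real.mul_self_sqrt Real.pi_pos.le
    have h2x : Real.sqrt (2 * x) * Real.sqrt (2 * x) = 2 * x :=
      Real.mul_self_sqrt (by positivity)
    have hid : (2 : ℝ) ^ (m + m) * (S * S) * Real.exp 1 ^ (m + m)
        = π * (2 * x) * (x + x) ^ (m + m) := by
      calc (2 : ℝ) ^ (m + m) * (S * S) * Real.exp 1 ^ (m + m)
          = (Real.sqrt π * Real.sqrt π) * (Real.sqrt (2 * x) * Real.sqrt (2 * x)) *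
            ((2 : ℝ) ^ (m + m) *
              ((x / Real.exp 1) ^ m * (x / Real.exp 1) ^ m * Real.exp 1 ^ (m + m))) := by
            rw [hS]; ring
        _ = π * (2 * x) * ((2 : ℝ) ^ (m + m) * x ^ (m + m)) := by rw [hpi, h2x, hdiv]
        _ = π * (2 * x) * (x + x) ^ (m + m) := by rw [← mul_pow]; ring_nf
    have hcast : ((m + m : ℕ) : ℝ) = x + x := by rw [hx]; push_cast; ring
    have hexp : Real.exp ((m + m : ℕ) : ℝ) = Real.exp 1 ^ (m + m) := (Real.exp_one_pow _).symm
    have hfcast : ((m ! * m ! : ℕ) : ℝ) = (m ! : ℝ) * (m ! : ℝ) := by push_cast; ring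
    rw [hexp, hcast, hfcast]
    have hge : π * (2 * x) * (x + x) ^ (m + m)
        ≤ 2 ^ (m + m) * ((m ! : ℝ) * (m ! : ℝ)) * Real.exp 1 ^ (m + m) := by
      rw [← hid]
      have := mul_le_mul_of_nonneg_left hsq (by positivity : (0:ℝ) ≤ (2:ℝ) ^ (m + m))
      exact mul_le_mul_of_nonneg_right this (by positivity)
    have hlt : (x + x + 1) * (x + x) ^ (m + m) < π * (2 * x) * (x + x) ^ (m + m) := by
      have hp : (0 : ℝ) < (x + x) ^ (m + m) := by positivity
      have : x + x + 1 < π * (2 * x) := by nlinarith [Real.pi_gt_three]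
      exact mul_lt_mul_of_pos_right this hp
    calc (x + x + 1) * (x + x) ^ (m + m) < π * (2 * x) * (x + x) ^ (m + m) := hlt
      _ ≤ 2 ^ (m + m) * ((m ! : ℝ) * (m ! : ℝ)) * Real.exp 1 ^ (m + m) := hge
  · -- r = 2 * m + 1
    have hd : (2 * m + 1) / 2 = m := by omega
    have hs : 2 * m + 1 - m = m + 1 := by omega
    rw [hd, hs]
    rcases Nat.eq_zero_or_pos m with rfl | hm
    · norm_num
    · set x : ℝ := (m : ℝ) with hx
      have hx1 : (1 : ℝ) ≤ x := by rw [hx]; exact_mod_cast hm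
      set u : ℝ := 4 * x * (x + 1) with hu
      have hu8 : (8 : ℝ) ≤ u := by nlinarith
      have hu0 : (0 : ℝ) < u := by linarith
      have e1 := Real.exp_pos 1
      set S1 : ℝ := Real.sqrt π * (Real.sqrt (2 * x) * (x / Real.exp 1) ^ m) with hS1
      set S2 : ℝ := Real.sqrt π * (Real.sqrt (2 * (x + 1)) * ((x + 1) / Real.exp 1) ^ (m + 1))
        with hS2
      have hS10 : 0 ≤ S1 := by positivity
      have hS20 : 0 ≤ S2 := by positivity
      have hSm1 : S1 ≤ (m ! : ℝ) := stirling_lb m hm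
      have hSm2 : S2 ≤ ((m + 1)! : ℝ) := by
        have := stirling_lb (m + 1) (by omega)
        rw [hS2]; push_cast at this ⊢; convert this using 4 <;> push_cast <;> ring
      have hprod : S1 * S2 ≤ (m ! : ℝ) * ((m + 1)! : ℝ) :=
        mul_le_mul hSm1 hSm2 hS20 (Nat.cast_nonneg _)
      have hpi : Real.sqrt π * Real.sqrt π = π := Real.mul_self_sqrt Real.pi_pos.le
      have hsqrtu : Real.sqrt (2 * x) * Real.sqrt (2 * (x + 1)) = Real.sqrt u := by
        rw [← Real.sqrt_mul (by positivity)]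
        congr 1
        ring
      have ha : (x / Real.exp 1) ^ m * Real.exp 1 ^ m = x ^ m := by
        rw [div_pow, div_mul_cancel₀]; positivity
      have hb : ((x + 1) / Real.exp 1) ^ (m + 1) * Real.exp 1 ^ (m + 1) = (x + 1) ^ (m + 1) := by
        rw [div_pow, div_mul_cancel₀]; positivity
      have hesplit : Real.exp 1 ^ (2 * m + 1) = Real.exp 1 ^ m * Real.exp 1 ^ (m + 1) := by
        rw [← pow_add]; congr 1; omega
      have h2split : (2 : ℝ) ^ (2 * m + 1) = 2 * 4 ^ m := by
        rw [pow_succ, pow_mul]; norm_num; ring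
      have hid : (2 : ℝ) ^ (2 * m + 1) * (S1 * S2) * Real.exp 1 ^ (2 * m + 1)
          = π * Real.sqrt u * (2 * (x + 1)) * u ^ m := by
        rw [hesplit, h2split, hS1, hS2]
        calc 2 * 4 ^ m *
              (Real.sqrt π * (Real.sqrt (2 * x) * (x / Real.exp 1) ^ m) *
                (Real.sqrt π * (Real.sqrt (2 * (x + 1)) * ((x + 1) / Real.exp 1) ^ (m + 1)))) *
              (Real.exp 1 ^ m * Real.exp 1 ^ (m + 1))
            = (Real.sqrt π * Real.sqrt π) * (Real.sqrt (2 * x) * Real.sqrt (2 * (x + 1))) *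
              (2 * 4 ^ m * ((x / Real.exp 1) ^ m * Real.exp 1 ^ m) *
                (((x + 1) / Real.exp 1) ^ (m + 1) * Real.exp 1 ^ (m + 1))) := by ring
          _ = π * Real.sqrt u * (2 * 4 ^ m * x ^ m * (x + 1) ^ (m + 1)) := by
              rw [hpi, hsqrtu, ha, hb]; try ring
          _ = π * Real.sqrt u * (2 * (x + 1)) * u ^ m := by
              rw [hu]
              have : (4 * x * (x + 1)) ^ m = 4 ^ m * x ^ m * (x + 1) ^ m := by
                rw [mul_pow, mul_pow]
              rw [this, pow_succ]
              ring
      -- bound (u+1)^m ≤ u^m * (8/7)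
      have hexp18 : Real.exp (8⁻¹ : ℝ) ≤ 8 / 7 := by
        have h1 := Real.add_one_le_exp (-(8⁻¹ : ℝ))
        have h2 : Real.exp (8⁻¹ : ℝ) * Real.exp (-(8⁻¹ : ℝ)) = 1 := by
          rw [← Real.exp_add]; norm_num
        nlinarith [Real.exp_pos (8⁻¹ : ℝ), Real.exp_pos (-(8⁻¹ : ℝ))]
      have hub : (u + 1) ^ m ≤ u ^ m * (8 / 7) := by
        have h1 : u + 1 ≤ u * Real.exp (1 / u) := by
          have h0 := mul_le_mul_of_nonneg_left (Real.add_one_le_exp (1 / u)) hu0.le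
          have he : u * (1 / u + 1) = u + 1 := by field_simp; ring
          rw [he] at h0
          linarith
        have h2 : (u + 1) ^ m ≤ (u * Real.exp (1 / u)) ^ m :=
          pow_le_pow_left₀ (by positivity) h1 m
        have h3 : (u * Real.exp (1 / u)) ^ m = u ^ m * Real.exp ((m : ℝ) * (1 / u)) := by
          rw [mul_pow, ← Real.exp_nat_mul]
        have h4 : (m : ℝ) * (1 / u) ≤ 8⁻¹ := by
          rw [mul_one_div, div_le_iff₀ hu0, hu, ← hx]
          nlinarith
        have h5 : Real.exp ((m : ℝ) * (1 / u)) ≤ 8 / 7 :=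
          le_trans (Real.exp_le_exp.mpr h4) hexp18
        calc (u + 1) ^ m ≤ u ^ m * Real.exp ((m : ℝ) * (1 / u)) := by rw [← h3]; exact h2
          _ ≤ u ^ m * (8 / 7) := by
              exact mul_le_mul_of_nonneg_left h5 (by positivity)
      -- bound (8/7)*(2x+1) < π * sqrt u
      have hsq : (8 / 7 : ℝ) * (2 * x + 1) < π * Real.sqrt u := by
        have hb2 : (0 : ℝ) ≤ π * Real.sqrt u := by positivity
        refine lt_of_pow_lt_pow_left₀ 2 hb2 ?_
        rw [mul_pow, mul_pow, Real.sq_sqrt hu0.le, hu]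
        have hpi9 : (9 : ℝ) < π ^ 2 := by nlinarith [Real.pi_gt_three]
        have hx0 : (0 : ℝ) < 4 * x * (x + 1) := by nlinarith
        nlinarith [hpi9, hx1, mul_pos (sub_pos.mpr hpi9) hx0, sq_nonneg (x - 1)]
      -- assemble
      have hcast : ((2 * m + 1 : ℕ) : ℝ) = 2 * x + 1 := by rw [hx]; push_cast; ring
      have hexp : Real.exp ((2 * m + 1 : ℕ) : ℝ) = Real.exp 1 ^ (2 * m + 1) :=
        (Real.exp_one_pow _).symm
      have hfcast : ((m ! * (m + 1)! : ℕ) : ℝ) = (m ! : ℝ) * ((m + 1)! : ℝ) := by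
        push_cast; ring
      rw [hexp, hcast, hfcast]
      have hn : (2 * x + 1) ^ (2 * m + 1) = (2 * x + 1) * (u + 1) ^ m := by
        have h1 : (2 * x + 1) ^ (2 * m + 1) = ((2 * x + 1) ^ 2) ^ m * (2 * x + 1) := by
          rw [pow_succ, pow_mul]
        rw [h1]
        have h2 : (2 * x + 1) ^ 2 = u + 1 := by rw [hu]; ring
        rw [h2]; ring
      have hup : (0 : ℝ) < u ^ m := by positivity
      have step1 : (2 * x + 1 + 1) * (2 * x + 1) ^ (2 * m + 1)
          ≤ (2 * (x + 1)) * u ^ m * ((8 / 7) * (2 * x + 1)) := by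
        rw [hn]
        have : (2 * x + 1 + 1) * ((2 * x + 1) * (u + 1) ^ m)
            = (2 * (x + 1)) * (2 * x + 1) * (u + 1) ^ m := by ring
        rw [this]
        have h6 : (2 * (x + 1)) * (2 * x + 1) * (u + 1) ^ m
            ≤ (2 * (x + 1)) * (2 * x + 1) * (u ^ m * (8 / 7)) :=
          mul_le_mul_of_nonneg_left hub (by positivity)
        calc (2 * (x + 1)) * (2 * x + 1) * (u + 1) ^ m
            ≤ (2 * (x + 1)) * (2 * x + 1) * (u ^ m * (8 / 7)) := h6
          _ = (2 * (x + 1)) * u ^ m * ((8 / 7) * (2 * x + 1)) := by ring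
      have step2 : (2 * (x + 1)) * u ^ m * ((8 / 7) * (2 * x + 1))
          < (2 * (x + 1)) * u ^ m * (π * Real.sqrt u) :=
        mul_lt_mul_of_pos_left hsq (by positivity)
      have step3 : (2 * (x + 1)) * u ^ m * (π * Real.sqrt u)
          = (2 : ℝ) ^ (2 * m + 1) * (S1 * S2) * Real.exp 1 ^ (2 * m + 1) := by
        rw [hid]; ring
      have step4 : (2 : ℝ) ^ (2 * m + 1) * (S1 * S2) * Real.exp 1 ^ (2 * m + 1)
          ≤ (2 : ℝ) ^ (2 * m + 1) * ((m ! : ℝ) * ((m + 1)! : ℝ)) * Real.exp 1 ^ (2 * m + 1) := by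
        have := mul_le_mul_of_nonneg_left hprod (by positivity : (0:ℝ) ≤ (2:ℝ) ^ (2 * m + 1))
        exact mul_le_mul_of_nonneg_right this (by positivity)
      calc (2 * x + 1 + 1) * (2 * x + 1) ^ (2 * m + 1)
          ≤ (2 * (x + 1)) * u ^ m * ((8 / 7) * (2 * x + 1)) := step1
        _ < (2 * (x + 1)) * u ^ m * (π * Real.sqrt u) := step2
        _ = (2 : ℝ) ^ (2 * m + 1) * (S1 * S2) * Real.exp 1 ^ (2 * m + 1) := step3
        _ ≤ (2 : ℝ) ^ (2 * m + 1) * ((m ! : ℝ) * ((m + 1)! : ℝ)) * Real.exp 1 ^ (2 * m + 1) :=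
            step4


lemma center_le (r a b : ℕ) (hab : a + b = r) :
    (r / 2)! * (r - r / 2)! ≤ a ! * b ! := by
  have ha : a ≤ r := by omega
  have hb : b = r - a := by omega
  subst hb
  have h1 := Nat.choose_mul_factorial_mul_factorial ha
  have h2 := Nat.choose_mul_factorial_mul_factorial (Nat.div_le_self r 2)
  have h3 : r.choose a ≤ r.choose (r / 2) := Nat.choose_le_middle a r
  have hpos : 0 < r.choose (r / 2) := Nat.choose_pos (Nat.div_le_self r 2)
  have key : (r / 2)! * (r - r / 2)! * r.choose (r / 2)
      ≤ a ! * (r - a)! * r.choose (r / 2) := by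
    calc (r / 2)! * (r - r / 2)! * r.choose (r / 2) = r ! := by rw [← h2]; ring
      _ = a ! * (r - a)! * r.choose a := by rw [← h1]; ring
      _ ≤ a ! * (r - a)! * r.choose (r / 2) := Nat.mul_le_mul_left _ h3
  exact Nat.le_of_mul_le_mul_right key hpos

lemma prod_abs_range (r c : ℕ) (hc : c ≤ r) :
    ∏ j ∈ (Finset.range (r + 1)).erase c, |(c : ℝ) - (j : ℝ)| = (c)! * (r - c)! := by
  have hsplit : (Finset.range (r + 1)).erase c = Finset.range c ∪ Finset.Ico (c + 1) (r + 1) := by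
    ext j
    simp only [Finset.mem_erase, Finset.mem_range, Finset.mem_union, Finset.mem_Ico]
    omega
  have hdisj : Disjoint (Finset.range c) (Finset.Ico (c + 1) (r + 1)) := by
    simp only [Finset.disjoint_left, Finset.mem_range, Finset.mem_Ico]
    omega
  rw [hsplit, Finset.prod_union hdisj]
  have h1 : ∏ j ∈ Finset.range c, |(c : ℝ) - (j : ℝ)| = (c ! : ℕ) := by
    have e1 : ∀ j ∈ Finset.range c, |(c : ℝ) - (j : ℝ)| = ((c - j : ℕ) : ℝ) := by
      intro j hj
      rw [Finset.mem_range] at hj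
      rw [Nat.cast_sub hj.le, abs_of_nonneg]
      have : (j : ℝ) < c := by exact_mod_cast hj
      linarith
    rw [Finset.prod_congr rfl e1, ← Nat.cast_prod]
    congr 1
    calc ∏ j ∈ Finset.range c, (c - j) = ∏ j ∈ Finset.range c, (c - 1 - j + 1) := by
          apply Finset.prod_congr rfl
          intro j hj; rw [Finset.mem_range] at hj; omega
      _ = ∏ j ∈ Finset.range c, (j + 1) := Finset.prod_range_reflect (fun j => j + 1) c
      _ = c ! := Finset.prod_range_add_one_eq_factorial c
  have h2 : ∏ j ∈ Finset.Ico (c + 1) (r + 1), |(c : ℝ) - (j : ℝ)| = ((r - c)! : ℕ) := by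
    have e2 : ∀ j ∈ Finset.Ico (c + 1) (r + 1), |(c : ℝ) - (j : ℝ)| = ((j - c : ℕ) : ℝ) := by
      intro j hj
      rw [Finset.mem_Ico] at hj
      rw [abs_sub_comm, Nat.cast_sub (by omega), abs_of_nonneg]
      have : (c : ℝ) < j := by exact_mod_cast (by omega : c < j)
      linarith
    rw [Finset.prod_congr rfl e2, ← Nat.cast_prod]
    congr 1
    rw [Finset.prod_Ico_eq_prod_range]
    have : r + 1 - (c + 1) = r - c := by omega
    rw [this]
    calc ∏ k ∈ Finset.range (r - c), (c + 1 + k - c) = ∏ k ∈ Finset.range (r - c), (k + 1) := by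
          apply Finset.prod_congr rfl; intro k _; omega
      _ = (r - c)! := Finset.prod_range_add_one_eq_factorial _
  rw [h1, h2]

/-- for `r ≥ 1` and equally spaced points `λᵢ = -1 + 2i/r`, `i = 0,…,r`,
in `[-1,1]`, for every `i` the product of distances to the other nodes satisfies
`∏_{j ≠ i} |λᵢ - λⱼ| > (r+1) e^{-r}`. -/
theorem node_distance_product_lower_bound (r : ℕ) (hr : 1 ≤ r) (i : Fin (r + 1)) :
    ((r : ℝ) + 1) * Real.exp (-(r : ℝ)) <
      ∏ j ∈ Finset.univ.erase i,
        |(-1 + 2 * ((i : ℕ) : ℝ) / (r : ℝ)) - (-1 + 2 * ((j : ℕ) : ℝ) / (r : ℝ))| := by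
  set c : ℕ := (i : ℕ) with hc_def
  have hc : c ≤ r := Nat.lt_succ_iff.mp i.isLt
  have hr0 : (0 : ℝ) < r := by exact_mod_cast hr
  -- the product equals (2/r)^r * c! * (r-c)!
  have hterm : ∀ j : Fin (r + 1),
      |(-1 + 2 * ((i : ℕ) : ℝ) / (r : ℝ)) - (-1 + 2 * ((j : ℕ) : ℝ) / (r : ℝ))|
        = 2 / (r : ℝ) * |(c : ℝ) - ((j : ℕ) : ℝ)| := by
    intro j
    rw [show (-1 + 2 * ((i : ℕ) : ℝ) / (r : ℝ)) - (-1 + 2 * ((j : ℕ) : ℝ) / (r : ℝ))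
        = 2 / (r : ℝ) * ((c : ℝ) - ((j : ℕ) : ℝ)) by rw [hc_def]; field_simp; ring,
      abs_mul, abs_of_pos (by positivity : (0:ℝ) < 2 / (r:ℝ))]
  have hcard : (Finset.univ.erase i).card = r := by
    rw [Finset.card_erase_of_mem (Finset.mem_univ i), Finset.card_univ, Fintype.card_fin]
    omega
  have hfin : ∏ j ∈ Finset.univ.erase i, |(c : ℝ) - ((j : ℕ) : ℝ)|
      = ((c ! : ℕ) : ℝ) * (((r - c)! : ℕ) : ℝ) := by
    set g : ℕ → ℝ := fun x => if x = c then 1 else |(c : ℝ) - (x : ℝ)| with hg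
    calc ∏ j ∈ Finset.univ.erase i, |(c : ℝ) - ((j : ℕ) : ℝ)|
        = ∏ j ∈ Finset.univ.erase i, g (j : ℕ) := by
          refine Finset.prod_congr rfl fun j hj => ?_
          have hj' : (j : ℕ) ≠ c := by
            intro h
            exact (Finset.mem_erase.mp hj).1 (Fin.ext h)
          rw [hg]
          simp only [if_neg hj']
      _ = ∏ j : Fin (r + 1), g (j : ℕ) :=
          Finset.prod_erase Finset.univ (by rw [hg]; simp [hc_def])
      _ = ∏ x ∈ Finset.range (r + 1), g x := Fin.prod_univ_eq_prod_range _ _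
      _ = ∏ x ∈ (Finset.range (r + 1)).erase c, g x :=
          (Finset.prod_erase _ (by rw [hg]; simp)).symm
      _ = ∏ x ∈ (Finset.range (r + 1)).erase c, |(c : ℝ) - (x : ℝ)| := by
          refine Finset.prod_congr rfl fun x hx => ?_
          rw [hg]
          simp only [if_neg (Finset.mem_erase.mp hx).1]
      _ = ((c ! : ℕ) : ℝ) * (((r - c)! : ℕ) : ℝ) := prod_abs_range r c hc
  have hprodid : ∏ j ∈ Finset.univ.erase i,
      |(-1 + 2 * ((i : ℕ) : ℝ) / (r : ℝ)) - (-1 + 2 * ((j : ℕ) : ℝ) / (r : ℝ))|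
      = (2 / (r : ℝ)) ^ r * (((c ! * (r - c)! : ℕ) : ℝ)) := by
    calc ∏ j ∈ Finset.univ.erase i,
        |(-1 + 2 * ((i : ℕ) : ℝ) / (r : ℝ)) - (-1 + 2 * ((j : ℕ) : ℝ) / (r : ℝ))|
        = ∏ j ∈ Finset.univ.erase i, (2 / (r : ℝ) * |(c : ℝ) - ((j : ℕ) : ℝ)|) :=
          Finset.prod_congr rfl fun j _ => hterm j
      _ = (2 / (r : ℝ)) ^ r * ∏ j ∈ Finset.univ.erase i, |(c : ℝ) - ((j : ℕ) : ℝ)| := by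
          rw [Finset.prod_mul_distrib, Finset.prod_const, hcard]
      _ = (2 / (r : ℝ)) ^ r * (((c ! * (r - c)! : ℕ) : ℝ)) := by
          rw [hfin]; push_cast; ring
  rw [hprodid]
  -- the key inequality
  have hkey : ((r : ℝ) + 1) * (r : ℝ) ^ r
      < 2 ^ r * ((c ! * (r - c)! : ℕ) : ℝ) * Real.exp r := by
    have h1 := key_center r hr
    have h2 : ((r / 2)! * (r - r / 2)! : ℕ) ≤ (c ! * (r - c)! : ℕ) :=
      center_le r c (r - c) (by omega)
    calc ((r : ℝ) + 1) * (r : ℝ) ^ r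
        < 2 ^ r * (((r / 2)! * (r - r / 2)! : ℕ) : ℝ) * Real.exp r := h1
      _ ≤ 2 ^ r * ((c ! * (r - c)! : ℕ) : ℝ) * Real.exp r := by
          have : (((r / 2)! * (r - r / 2)! : ℕ) : ℝ) ≤ ((c ! * (r - c)! : ℕ) : ℝ) := by
            exact_mod_cast h2
          have h3 := mul_le_mul_of_nonneg_left this (by positivity : (0:ℝ) ≤ (2:ℝ) ^ r)
          exact mul_le_mul_of_nonneg_right h3 (Real.exp_pos _).le
  have hN : (0 : ℝ) ≤ ((c ! * (r - c)! : ℕ) : ℝ) := Nat.cast_nonneg _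
  rw [Real.exp_neg, ← div_eq_mul_inv,
    show (2 / (r : ℝ)) ^ r * ((c ! * (r - c)! : ℕ) : ℝ)
      = 2 ^ r * ((c ! * (r - c)! : ℕ) : ℝ) / (r : ℝ) ^ r by rw [div_pow]; ring,
    div_lt_div_iff₀ (Real.exp_pos _) (pow_pos hr0 r)]
  linarith [hkey]
end

section
/- For every u ∈ ℕ and every r₁, r₂, …, r_u ∈ ℕ with r = r₁ + ⋯ + r_u, there exist a real sequence (βᵢ)_{i ∈ ℕ₀} and numbers λ_{ij} ∈ [−1,1] for i ∈ ℕ₀, j ∈ {1,…,u}, such that Σᵢ βᵢ (Σ_{j=1}^{u} λ_{ij} zⱼ)^r = z₁^{r₁} z₂^{r₂} ⋯ z_u^{r_u} for all z₁, …, z_u ∈ ℝ, and Σᵢ |βᵢ| ≤ e^{(u−1)r}. -/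
open Finset Function

noncomputable def sgn (b : Bool) : ℝ := if b then 1 else -1

lemma sgn_abs (b : Bool) : |sgn b| = 1 := by cases b <;> simp [sgn]

lemma sum_sgn_pow (e : ℕ) : ∑ b : Bool, sgn b ^ e = if Even e then 2 else 0 := by
  rcases Nat.even_or_odd e with h | h
  · simp [Fintype.sum_bool, sgn, h.neg_one_pow, h]
  · simp [Fintype.sum_bool, sgn, h.neg_one_pow, Nat.not_even_iff_odd.mpr h]

lemma polarization (n : ℕ) (x : Fin n → ℝ) :
    ∑ ε : Fin n → Bool, (∏ i, sgn (ε i)) * (∑ i, sgn (ε i) * x i) ^ n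
      = 2 ^ n * (Nat.factorial n) * ∏ i, x i := by
  classical
  have expand : ∀ ε : Fin n → Bool,
      (∑ i, sgn (ε i) * x i) ^ n = ∑ f : Fin n → Fin n, ∏ k, (sgn (ε (f k)) * x (f k)) :=
    fun ε => Fintype.sum_pow _ n
  calc
    ∑ ε : Fin n → Bool, (∏ i, sgn (ε i)) * (∑ i, sgn (ε i) * x i) ^ n
      = ∑ ε : Fin n → Bool, ∑ f : Fin n → Fin n,
          ((∏ i, sgn (ε i)) * ∏ k, sgn (ε (f k))) * ∏ k, x (f k) := by
        refine Finset.sum_congr rfl fun ε _ => ?_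
        rw [expand ε, Finset.mul_sum]
        refine Finset.sum_congr rfl fun f _ => ?_
        rw [Finset.prod_mul_distrib]; ring
    _ = ∑ f : Fin n → Fin n, (∑ ε : Fin n → Bool,
          ((∏ i, sgn (ε i)) * ∏ k, sgn (ε (f k)))) * ∏ k, x (f k) := by
        rw [Finset.sum_comm]
        exact Finset.sum_congr rfl fun f _ => (Finset.sum_mul _ _ _).symm
    _ = 2 ^ n * (Nat.factorial n) * ∏ i, x i := by
        have key : ∀ f : Fin n → Fin n,
            (∑ ε : Fin n → Bool, ((∏ i, sgn (ε i)) * ∏ k, sgn (ε (f k))))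
              = if Bijective f then (2:ℝ) ^ n else 0 := by
          intro f
          set m : Fin n → ℕ := fun i => #{k : Fin n | f k = i} with hm
          have hsum : ∑ i, m i = n := by
            simpa using (Finset.card_eq_sum_card_fiberwise
              (f := f) (s := univ) (t := univ) (fun x _ => mem_univ _)).symm
          have fib : ∀ ε : Fin n → Bool, (∏ k, sgn (ε (f k))) = ∏ i, sgn (ε i) ^ m i := by
            intro ε
            rw [Finset.prod_comp (fun i => sgn (ε i)) f]
            refine Finset.prod_subset (Finset.subset_univ _) ?_
            intro i _ hi
            have h0 : m i = 0 := Finset.card_eq_zero.mpr (by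
              ext k
              simp only [Finset.mem_filter, Finset.mem_univ, true_and,
                Finset.notMem_empty, iff_false]
              exact fun hk => hi (Finset.mem_image.mpr ⟨k, mem_univ _, hk⟩))
            show sgn (ε i) ^ m i = 1
            rw [h0, pow_zero]
          have step1 : (∑ ε : Fin n → Bool, ((∏ i, sgn (ε i)) * ∏ k, sgn (ε (f k))))
              = ∏ i, (if Even (1 + m i) then (2:ℝ) else 0) := by
            have hε : ∀ ε : Fin n → Bool, (∏ i, sgn (ε i)) * ∏ k, sgn (ε (f k))
                = ∏ i, sgn (ε i) ^ (1 + m i) := by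
              intro ε
              rw [fib ε, ← Finset.prod_mul_distrib]
              exact Finset.prod_congr rfl fun i _ => by rw [pow_add, pow_one]
            rw [Finset.sum_congr rfl fun ε _ => hε ε,
              ← Fintype.prod_sum (fun (i : Fin n) (b : Bool) => sgn b ^ (1 + m i))]
            exact Finset.prod_congr rfl fun i _ => sum_sgn_pow (1 + m i)
          rw [step1]
          by_cases hb : Bijective f
          · have h1 : ∀ i, m i = 1 := by
              intro i
              rw [hm]
              refine Finset.card_eq_one.mpr ⟨(Equiv.ofBijective f hb).symm i, ?_⟩
              ext k
              simp only [Finset.mem_filter, Finset.mem_univ, true_and, Finset.mem_singleton]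
              exact (Equiv.ofBijective f hb).apply_eq_iff_eq_symm_apply
            rw [if_pos hb]
            have h2 : ∀ i : Fin n, (if Even (1 + m i) then (2:ℝ) else 0) = 2 := by
              intro i; rw [h1 i]; norm_num
            rw [Finset.prod_congr rfl fun i _ => h2 i]
            simp
          · have hev : ∃ i, Even (m i) := by
              by_contra hodd
              push_neg at hodd
              have hodd' : ∀ i, Odd (m i) := fun i => Nat.not_even_iff_odd.mp (hodd i)
              have h1 : ∀ i, 1 ≤ m i := fun i => (hodd' i).pos
              have hall : ∀ i, m i = 1 := by
                by_contra hne; push_neg at hne; obtain ⟨i0, hi0⟩ := hne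
                have h2 : 2 ≤ m i0 := lt_of_le_of_ne (h1 i0) (Ne.symm hi0)
                have hlt : n < ∑ i, m i := by
                  calc n = ∑ _i : Fin n, 1 := by simp
                  _ < ∑ i, m i := Finset.sum_lt_sum (fun i _ => h1 i) ⟨i0, mem_univ _, by omega⟩
                omega
              apply hb
              rw [← Finite.surjective_iff_bijective]
              intro i
              have hne : ({k : Fin n | f k = i} : Finset (Fin n)).Nonempty :=
                Finset.card_pos.mp (by show 0 < m i; rw [hall i]; exact Nat.one_pos)
              obtain ⟨k, hk⟩ := hne
              exact ⟨k, (Finset.mem_filter.mp hk).2⟩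
            obtain ⟨i, hi⟩ := hev
            rw [if_neg hb]
            refine Finset.prod_eq_zero (mem_univ i) ?_
            rw [if_neg]
            rw [add_comm]
            simpa [Nat.even_add_one] using hi
        have hcard : #(univ.filter (fun f : Fin n → Fin n => Bijective f))
            = Nat.factorial n := by
          have hc : #(univ.filter (fun f : Fin n → Fin n => Bijective f))
              = Fintype.card (Equiv.Perm (Fin n)) := by
            rw [Fintype.card]
            refine (Finset.card_bij
              (fun (σ : Equiv.Perm (Fin n)) _ => (⇑σ : Fin n → Fin n)) ?_ ?_ ?_).symm
            · intro σ _; exact Finset.mem_filter.mpr ⟨mem_univ _, σ.bijective⟩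
            · intro σ1 _ σ2 _ h; exact Equiv.coe_fn_injective h
            · intro f hf; exact ⟨Equiv.ofBijective f (Finset.mem_filter.mp hf).2, mem_univ _, rfl⟩
          rw [hc, Fintype.card_perm, Fintype.card_fin]
        rw [Finset.sum_congr rfl fun f _ => by rw [key f]]
        calc ∑ f : Fin n → Fin n, (if Bijective f then (2:ℝ)^n else 0) * ∏ k, x (f k)
            = ∑ f : Fin n → Fin n,
                (if Bijective f then (2:ℝ)^n * ∏ k, x (f k) else 0) := by
              exact Finset.sum_congr rfl fun f _ => by split <;> simp
          _ = ∑ f ∈ univ.filter (fun f : Fin n → Fin n => Bijective f),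
                (2:ℝ)^n * ∏ k, x (f k) := (Finset.sum_filter _ _).symm
          _ = ∑ f ∈ univ.filter (fun f : Fin n → Fin n => Bijective f),
                (2:ℝ)^n * ∏ i, x i := by
              refine Finset.sum_congr rfl fun f hf => ?_
              have hb := (Finset.mem_filter.mp hf).2
              congr 1
              exact (Equiv.ofBijective f hb).prod_comp x
          _ = 2 ^ n * (Nat.factorial n) * ∏ i, x i := by
              rw [Finset.sum_const, hcard, nsmul_eq_mul]; ring



/-- every monomial `z₁^{r₁} ⋯ z_u^{r_u}` of total degree `r = r₁ + ⋯ + r_u`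
is an absolutely convergent linear combination of `r`-th powers of linear forms with
coefficient vectors in `[-1,1]^u`, and the ℓ¹-norm of the combination coefficients is at
most `e^{(u-1)r}`. -/
theorem monomial_as_powers_of_linear_forms (u : ℕ) (hu : 1 ≤ u)
    (r : Fin u → ℕ) (hr : ∀ j, 1 ≤ r j) :
    ∃ (β : ℕ → ℝ) (lam : ℕ → Fin u → ℝ),
      (∀ i j, lam i j ∈ Set.Icc (-1 : ℝ) 1) ∧
      Summable (fun i => |β i|) ∧
      (∑' i, |β i|) ≤ Real.exp (((u : ℝ) - 1) * ((∑ j, r j : ℕ) : ℝ)) ∧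
      (∀ z : Fin u → ℝ,
        Summable (fun i => β i * (∑ j, lam i j * z j) ^ (∑ j, r j)) ∧
        (∑' i, β i * (∑ j, lam i j * z j) ^ (∑ j, r j)) = ∏ j, z j ^ r j) := by
  classical
  set n := ∑ j, r j with hn
  have hun : u ≤ n := by
    calc u = ∑ _j : Fin u, 1 := by simp
    _ ≤ n := Finset.sum_le_sum fun j _ => hr j
  have hn1 : 1 ≤ n := le_trans hu hun
  have hnR : (0:ℝ) < n := by exact_mod_cast hn1
  rcases eq_or_lt_of_le hu with h1 | h2
  · -- case u = 1
    subst h1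
    have hn0 : n = r 0 := by rw [hn]; simp [Fin.sum_univ_one]
    refine ⟨fun i => if i = 0 then 1 else 0, fun _ _ => 1, ?_, ?_, ?_, ?_⟩
    · intro i j; constructor <;> norm_num
    · refine summable_of_ne_finset_zero (s := {0}) fun i hi => ?_
      simp at hi; simp [hi]
    · rw [tsum_eq_sum (s := {0}) (fun i hi => by simp at hi; simp [hi])]
      simp
    · intro z
      constructor
      · refine summable_of_ne_finset_zero (s := {0}) fun i hi => ?_
        simp at hi; simp [hi]
      · rw [tsum_eq_sum (s := {0}) (fun i hi => by simp at hi; simp [hi])]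
        simp [Fin.sum_univ_one, Fin.prod_univ_one, hn0]
  · -- case 2 ≤ u
    have hu2 : (1:ℝ) ≤ (u:ℝ) - 1 := by
      have : (2:ℝ) ≤ u := by exact_mod_cast h2
      linarith
    have hcardS : Fintype.card (Σ j : Fin u, Fin (r j)) = n := by
      simp [Fintype.card_sigma, hn]
    let e : (Σ j : Fin u, Fin (r j)) ≃ Fin n := Fintype.equivFinOfCardEq hcardS
    have hcardB : Fintype.card (Fin n → Bool) = 2 ^ n := by
      simp [Fintype.card_fun]
    let c : Fin (2 ^ n) ≃ (Fin n → Bool) := (Fintype.equivFinOfCardEq hcardB).symm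
    set D : ℝ := (n:ℝ) ^ n / (2 ^ n * (Nat.factorial n)) with hD
    have hD0 : 0 ≤ D := by
      apply div_nonneg (by positivity) (by positivity)
    let B : (Fin n → Bool) → ℝ := fun ε => (∏ k, sgn (ε k)) * D
    let L : (Fin n → Bool) → Fin u → ℝ := fun ε j =>
      (∑ t : Fin (r j), sgn (ε (e ⟨j, t⟩))) / n
    have habsB : ∀ ε, |B ε| = D := by
      intro ε
      rw [abs_mul, abs_prod]
      simp [sgn_abs, abs_of_nonneg hD0]
    have hL : ∀ ε j, |L ε j| ≤ 1 := by
      intro ε j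
      rw [abs_div, abs_of_pos hnR, div_le_one hnR]
      calc |∑ t : Fin (r j), sgn (ε (e ⟨j, t⟩))|
          ≤ ∑ t : Fin (r j), |sgn (ε (e ⟨j, t⟩))| := Finset.abs_sum_le_sum_abs _ _
        _ = (r j : ℝ) := by simp [sgn_abs]
        _ ≤ (n : ℝ) := by
            exact_mod_cast Nat.cast_le.mpr (Finset.single_le_sum (f := r)
              (fun j _ => Nat.zero_le _) (mem_univ j))
    -- the key finite identity
    have hlin : ∀ (ε : Fin n → Bool) (z : Fin u → ℝ),
        ∑ j, L ε j * z j = (1 / n) * ∑ k : Fin n, sgn (ε k) * z (e.symm k).1 := by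
      intro ε z
      have := Equiv.sum_comp e (fun k : Fin n => sgn (ε k) * z (e.symm k).1)
      rw [← this, ← Finset.univ_sigma_univ, Finset.sum_sigma]
      rw [Finset.mul_sum]
      refine Finset.sum_congr rfl fun j _ => ?_
      simp only [Equiv.symm_apply_apply]
      rw [show (L ε j * z j) = (1/n) * ((∑ t : Fin (r j), sgn (ε (e ⟨j, t⟩))) * z j) by
        simp only [L]; field_simp]
      rw [Finset.sum_mul, Finset.mul_sum]
    have hprod : ∀ z : Fin u → ℝ, ∏ k : Fin n, z (e.symm k).1 = ∏ j, z j ^ r j := by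
      intro z
      have := Equiv.prod_comp e (fun k : Fin n => z (e.symm k).1)
      rw [← this, ← Finset.univ_sigma_univ, Finset.prod_sigma]
      refine Finset.prod_congr rfl fun j _ => ?_
      simp [Equiv.symm_apply_apply]
    have hfin : ∀ z : Fin u → ℝ,
        ∑ ε : Fin n → Bool, B ε * (∑ j, L ε j * z j) ^ n = ∏ j, z j ^ r j := by
      intro z
      have hrw : ∀ ε : Fin n → Bool,
          B ε * (∑ j, L ε j * z j) ^ n
            = (1 / (2 ^ n * (Nat.factorial n))) * ((∏ k, sgn (ε k)) *
                (∑ k : Fin n, sgn (ε k) * z (e.symm k).1) ^ n) := by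
        intro ε
        rw [hlin ε z, mul_pow]
        simp only [B, hD]
        rw [div_pow, one_pow]
        field_simp
      rw [Finset.sum_congr rfl fun ε _ => hrw ε, ← Finset.mul_sum,
        polarization n (fun k => z (e.symm k).1), hprod z]
      have h2n : ((2:ℝ) ^ n * (Nat.factorial n)) ≠ 0 := by positivity
      field_simp
    -- assemble
    refine ⟨fun i => if h : i < 2 ^ n then B (c ⟨i, h⟩) else 0,
      fun i => if h : i < 2 ^ n then L (c ⟨i, h⟩) else fun _ => 0, ?_, ?_, ?_, ?_⟩
    · intro i j
      by_cases h : i < 2 ^ n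
      · simp only [dif_pos h]
        exact Set.mem_Icc.mpr (abs_le.mp (hL _ j))
      · simp only [dif_neg h]; norm_num
    · refine summable_of_ne_finset_zero (s := Finset.range (2 ^ n)) fun i hi => ?_
      rw [Finset.mem_range, not_lt] at hi
      simp [dif_neg (not_lt.mpr hi)]
    · rw [tsum_eq_sum (s := Finset.range (2 ^ n)) (fun i hi => by
        rw [Finset.mem_range, not_lt] at hi
        simp [dif_neg (not_lt.mpr hi)])]
      have : ∀ i ∈ Finset.range (2 ^ n),
          |if h : i < 2 ^ n then B (c ⟨i, h⟩) else 0| = D := by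
        intro i hi
        rw [Finset.mem_range] at hi
        rw [dif_pos hi, habsB]
      rw [Finset.sum_congr rfl this, Finset.sum_const, Finset.card_range, nsmul_eq_mul]
      have hval : (2 ^ n : ℝ) * D = (n:ℝ) ^ n / (Nat.factorial n) := by
        rw [hD]; field_simp
      push_cast
      rw [hval]
      have hle1 : (n:ℝ) ^ n / (Nat.factorial n) ≤ Real.exp n := by
        have hs := Real.sum_le_exp_of_nonneg (x := (n:ℝ)) (Nat.cast_nonneg n) (n + 1)
        refine le_trans ?_ hs
        exact Finset.single_le_sum (f := fun i => (n:ℝ) ^ i / (Nat.factorial i))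
          (fun i _ => by positivity) (Finset.self_mem_range_succ n)
      refine le_trans hle1 (Real.exp_le_exp.mpr ?_)
      exact le_mul_of_one_le_left (Nat.cast_nonneg n) hu2
    · intro z
      constructor
      · refine summable_of_ne_finset_zero (s := Finset.range (2 ^ n)) fun i hi => ?_
        rw [Finset.mem_range, not_lt] at hi
        simp [dif_neg (not_lt.mpr hi)]
      · rw [tsum_eq_sum (s := Finset.range (2 ^ n)) (fun i hi => by
          rw [Finset.mem_range, not_lt] at hi
          simp [dif_neg (not_lt.mpr hi)])]
        rw [← hfin z, Finset.sum_range (fun i =>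
          (if h : i < 2 ^ n then B (c ⟨i, h⟩) else 0) *
            (∑ j, (if h : i < 2 ^ n then L (c ⟨i, h⟩) else fun _ => 0) j * z j) ^ n)]
        rw [← Equiv.sum_comp c (fun ε => B ε * (∑ j, L ε j * z j) ^ n)]
        refine Finset.sum_congr rfl fun i _ => ?_
        simp [Fin.isLt, Fin.eta]
end
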